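/- arXiv:1106.5130 — 5 statements merged into one kernel-verified Lean document; each statement's English description precedes it below -/
import Mathlib

section
/- Let α ∈ (0, 1] and let P be a probability distribution over the positive integers. Then for every r ∈ [0, ∞] there exists a sequence of probability distributions P_n over the positive integers with d_TV(P_n, P) → 0 such that lim_{n→∞} H_α(P_n) = H_α(P) + r (with the conventions of arithmetic in [0, ∞]). -/
open Filter Topology
open scoped ENNReal

/-- A probability distribution over the positive integers (indexed by `ℕ`):
nonnegative masses summing to `1`. -/
def IsProbDist (p : ℕ → ℝ) : Prop :=
  (∀ n, 0 ≤ p n) ∧ HasSum p 1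

/-- The sum `∑ pₙ^α`, computed in `[0,∞]`, with the convention `0^0 = 0`. -/
noncomputable def renyiSum (p : ℕ → ℝ) (α : ℝ) : ℝ≥0∞ :=
  ∑' n, if p n = 0 then 0 else ENNReal.ofReal (p n ^ α)

/-- The Shannon entropy `H₁(P) = -∑ pₙ log pₙ`, valued in `[0,∞]`. -/
noncomputable def shannonEntropy (p : ℕ → ℝ) : ℝ≥0∞ :=
  ∑' n, ENNReal.ofReal (-(p n * Real.log (p n)))

/-- The Rényi entropy `H_α(P)`, valued in `[0,∞]`: for `α ≠ 1` it is
`(1/(1-α)) log ∑ pₙ^α` (equal to `∞` when the sum diverges), and for `α = 1`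
it is the Shannon entropy. -/
noncomputable def renyiEntropy (p : ℕ → ℝ) (α : ℝ) : ℝ≥0∞ :=
  if α = 1 then shannonEntropy p
  else if renyiSum p α = ∞ then ∞
  else ENNReal.ofReal ((1 - α)⁻¹ * Real.log (renyiSum p α).toReal)

/-- The region of convergence `R(P) = {α ≥ 0 : H_α(P) < ∞}`. -/
def convRegion (p : ℕ → ℝ) : Set ℝ :=
  {α : ℝ | 0 ≤ α ∧ renyiEntropy p α < ∞}

/-- The critical exponent `α_c(P) = inf {α ≥ 0 : H_α(P) < ∞}`. -/
noncomputable def criticalExponent (p : ℕ → ℝ) : ℝ :=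
  sInf (convRegion p)

/-- The total variation distance `d_TV(P,Q) = ∑ |pₙ - qₙ|`. -/
noncomputable def dTV (p q : ℕ → ℝ) : ℝ :=
  ∑' n, |p n - q n|


-- ===== auxiliary development =====

-- helpers
lemma prob_le_one {p : ℕ → ℝ} (hp : IsProbDist p) (k : ℕ) : p k ≤ 1 :=
  le_hasSum hp.2 k (fun i _ => hp.1 i)

lemma prob_summable {p : ℕ → ℝ} (hp : IsProbDist p) : Summable p := hp.2.summable

lemma tsum_ofReal_prob {p : ℕ → ℝ} (hp : IsProbDist p) :
    ∑' k, ENNReal.ofReal (p k) = 1 := by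
  rw [← ENNReal.ofReal_tsum_of_nonneg hp.1 hp.2.summable, hp.2.tsum_eq, ENNReal.ofReal_one]

lemma renyiSum_eq {p : ℕ → ℝ} (hp : ∀ k, 0 ≤ p k) {α : ℝ} (hα : 0 < α) :
    renyiSum p α = ∑' k, (ENNReal.ofReal (p k)) ^ α := by
  unfold renyiSum
  congr 1; ext k
  by_cases h : p k = 0
  · simp [h, ENNReal.zero_rpow_of_pos hα]
  · rw [if_neg h, ENNReal.ofReal_rpow_of_pos ((hp k).lt_of_ne (Ne.symm h))]

lemma renyiSum_ge_one {p : ℕ → ℝ} (hp : IsProbDist p) {α : ℝ} (hα : 0 < α) (hα1 : α ≤ 1) :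
    1 ≤ renyiSum p α := by
  rw [renyiSum_eq hp.1 hα]
  calc (1:ℝ≥0∞) = ∑' k, ENNReal.ofReal (p k) := (tsum_ofReal_prob hp).symm
  _ ≤ ∑' k, (ENNReal.ofReal (p k)) ^ α := by
      refine ENNReal.tsum_le_tsum fun k => ?_
      calc ENNReal.ofReal (p k) = (ENNReal.ofReal (p k)) ^ (1:ℝ) := by rw [ENNReal.rpow_one]
      _ ≤ (ENNReal.ofReal (p k)) ^ α :=
          ENNReal.rpow_le_rpow_of_exponent_ge (by
            simpa using ENNReal.ofReal_le_one.2 (prob_le_one hp k)) hα1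

-- x log x helpers
lemma log_le_div_e {t : ℝ} (ht : 0 < t) : Real.log t ≤ t * (Real.exp 1)⁻¹ := by
  have h := Real.log_le_sub_one_of_pos (x := t * (Real.exp 1)⁻¹)
    (by positivity)
  rw [Real.log_mul (ne_of_gt ht) (by positivity), Real.log_inv, Real.log_exp] at h
  linarith

lemma negMulLog_subadd {x y : ℝ} (hx : 0 ≤ x) (hy : 0 ≤ y) :
    Real.negMulLog (x + y) ≤ Real.negMulLog x + Real.negMulLog y := by
  rcases hx.eq_or_lt with rfl | hx'
  · simp
  rcases hy.eq_or_lt with rfl | hy'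
  · simp
  have h1 : Real.log x ≤ Real.log (x + y) := Real.log_le_log hx' (by linarith)
  have h2 : Real.log y ≤ Real.log (x + y) := Real.log_le_log hy' (by linarith)
  simp only [Real.negMulLog, neg_mul]
  nlinarith

lemma negMulLog_superadd {x y : ℝ} (hx : 0 ≤ x) (hy : 0 ≤ y) :
    Real.negMulLog x + Real.negMulLog y ≤
      Real.negMulLog (x + y) + (x + y) * (2 * (Real.exp 1)⁻¹) := by
  have key : ∀ a s : ℝ, 0 ≤ a → a ≤ s → 0 < s →
      a * (Real.log s - Real.log a) ≤ s * (Real.exp 1)⁻¹ := by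
    intro a s ha has hs
    rcases ha.eq_or_lt with rfl | ha'
    · simp; positivity
    · have : Real.log s - Real.log a = Real.log (s / a) := by
        rw [Real.log_div (ne_of_gt hs) (ne_of_gt ha')]
      rw [this]
      calc a * Real.log (s / a) ≤ a * ((s / a) * (Real.exp 1)⁻¹) := by
            apply mul_le_mul_of_nonneg_left (log_le_div_e (by positivity)) ha
            
      _ = s * (Real.exp 1)⁻¹ := by field_simp
  rcases (add_nonneg hx hy).eq_or_lt with h0 | hs
  · have hx0 : x = 0 := by linarith
    have hy0 : y = 0 := by linarith
    simp [hx0, hy0]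
  have h1 := key x (x + y) hx (by linarith) hs
  have h2 := key y (x + y) hy (by linarith) hs
  simp only [Real.negMulLog, neg_mul]
  nlinarith

lemma negMulLog_scale {c x : ℝ} :
    Real.negMulLog (c * x) = c * Real.negMulLog x + x * (c * (- Real.log c)) := by
  rw [Real.negMulLog_mul]
  simp [Real.negMulLog]
  ring

noncomputable def mixP (p : ℕ → ℝ) (N : ℕ → ℕ) (δ : ℕ → ℝ) (n k : ℕ) : ℝ :=
  (1 - N n * δ n) * p k + if k ∈ Finset.Ico n (n + N n) then δ n else 0

lemma bump_hasSum (N : ℕ → ℕ) (δ : ℕ → ℝ) (n : ℕ) :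
    HasSum (fun k => if k ∈ Finset.Ico n (n + N n) then δ n else 0)
      ((N n : ℝ) * δ n) := by
  have h := hasSum_sum_of_ne_finset_zero (L := SummationFilter.unconditional ℕ) (s := Finset.Ico n (n + N n))
    (f := fun k => if k ∈ Finset.Ico n (n + N n) then δ n else 0)
    (by intro b hb; simp [hb])
  have heq : (∑ k ∈ Finset.Ico n (n + N n),
      if k ∈ Finset.Ico n (n + N n) then δ n else 0) = (N n : ℝ) * δ n := by
    rw [Finset.sum_ite_of_true (fun k hk => hk), Finset.sum_const, Nat.card_Ico,
      nsmul_eq_mul]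
    congr 2
    omega
  rwa [heq] at h

lemma mixP_hasSum {p : ℕ → ℝ} (hp : IsProbDist p) (N : ℕ → ℕ) (δ : ℕ → ℝ) (n : ℕ) :
    HasSum (mixP p N δ n) 1 := by
  have h1 : HasSum (fun k => (1 - N n * δ n) * p k) ((1 - N n * δ n) * 1) :=
    hp.2.mul_left _
  have h2 := bump_hasSum N δ n
  have h3 := h1.add h2
  have : (1 - (N n:ℝ) * δ n) * 1 + (N n : ℝ) * δ n = 1 := by ring
  rw [this] at h3
  exact h3

lemma mixP_nonneg {p : ℕ → ℝ} (hp : IsProbDist p) {N : ℕ → ℕ} {δ : ℕ → ℝ} {n : ℕ}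
    (hδ : 0 ≤ δ n) (hε : (N n : ℝ) * δ n ≤ 1) (k : ℕ) : 0 ≤ mixP p N δ n k := by
  have := hp.1 k
  unfold mixP
  have h1 : (0:ℝ) ≤ (1 - N n * δ n) * p k := mul_nonneg (by linarith) this
  positivity

lemma mixP_isProbDist {p : ℕ → ℝ} (hp : IsProbDist p) {N : ℕ → ℕ} {δ : ℕ → ℝ} {n : ℕ}
    (hδ : 0 ≤ δ n) (hε : (N n : ℝ) * δ n ≤ 1) : IsProbDist (mixP p N δ n) :=
  ⟨mixP_nonneg hp hδ hε, mixP_hasSum hp N δ n⟩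

lemma dTV_mixP_le {p : ℕ → ℝ} (hp : IsProbDist p) {N : ℕ → ℕ} {δ : ℕ → ℝ} {n : ℕ}
    (hδ : 0 ≤ δ n) :
    dTV (mixP p N δ n) p ≤ 2 * ((N n : ℝ) * δ n) := by
  have hg : HasSum (fun k => (N n : ℝ) * δ n * p k +
      (if k ∈ Finset.Ico n (n + N n) then δ n else 0))
      ((N n : ℝ) * δ n * 1 + (N n : ℝ) * δ n) := (hp.2.mul_left _).add (bump_hasSum N δ n)
  have hbd : ∀ k, |mixP p N δ n k - p k| ≤ (N n : ℝ) * δ n * p k +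
      (if k ∈ Finset.Ico n (n + N n) then δ n else 0) := by
    intro k
    have hpk := hp.1 k
    have : mixP p N δ n k - p k = -((N n : ℝ) * δ n * p k) +
        (if k ∈ Finset.Ico n (n + N n) then δ n else 0) := by
      unfold mixP; ring
    rw [this]
    refine (abs_add_le _ _).trans ?_
    rw [abs_neg, abs_of_nonneg (by positivity), abs_of_nonneg (by positivity)]
  have hsumm : Summable fun k => |mixP p N δ n k - p k| :=
    Summable.of_nonneg_of_le (fun k => abs_nonneg _) hbd hg.summable
  calc dTV (mixP p N δ n) p ≤ (N n : ℝ) * δ n * 1 + (N n : ℝ) * δ n :=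
        Summable.tsum_le_tsum hbd hsumm hg.summable |>.trans_eq hg.tsum_eq
  _ = 2 * ((N n : ℝ) * δ n) := by ring

noncomputable def mixSeq (p : ℕ → ℝ) (N : ℕ → ℕ) (δ : ℕ → ℝ) (n : ℕ) : ℕ → ℝ :=
  if (N n : ℝ) * δ n ≤ 1/2 then mixP p N δ n else p

lemma mixSeq_isProbDist {p : ℕ → ℝ} (hp : IsProbDist p) {N : ℕ → ℕ} {δ : ℕ → ℝ}
    (hδ : ∀ n, 0 ≤ δ n) (n : ℕ) : IsProbDist (mixSeq p N δ n) := by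
  unfold mixSeq
  split_ifs with h
  · exact mixP_isProbDist hp (hδ n) (by linarith)
  · exact hp

lemma mixSeq_eventually_eq {p : ℕ → ℝ} {N : ℕ → ℕ} {δ : ℕ → ℝ}
    (hε : Tendsto (fun n => (N n : ℝ) * δ n) atTop (𝓝 0)) :
    ∀ᶠ n in atTop, mixSeq p N δ n = mixP p N δ n ∧ (N n : ℝ) * δ n ≤ 1/2 := by
  filter_upwards [hε.eventually (eventually_le_nhds (by norm_num : (0:ℝ) < 1/2))] with n hn
  exact ⟨if_pos hn, hn⟩

lemma tendsto_dTV_mixSeq {p : ℕ → ℝ} (hp : IsProbDist p) {N : ℕ → ℕ} {δ : ℕ → ℝ}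
    (hδ : ∀ n, 0 ≤ δ n)
    (hε : Tendsto (fun n => (N n : ℝ) * δ n) atTop (𝓝 0)) :
    Tendsto (fun n => dTV (mixSeq p N δ n) p) atTop (𝓝 0) := by
  have h2 : Tendsto (fun n => 2 * ((N n : ℝ) * δ n)) atTop (𝓝 0) := by
    simpa using hε.const_mul 2
  refine squeeze_zero' ?_ ?_ h2
  · filter_upwards with n
    exact tsum_nonneg fun k => abs_nonneg _
  · filter_upwards [mixSeq_eventually_eq hε] with n hn
    rw [hn.1]
    exact dTV_mixP_le hp (hδ n)

section
variable {α : ℝ} {p : ℕ → ℝ} {N : ℕ → ℕ} {δ : ℕ → ℝ} {n : ℕ}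

lemma tsum_ite_finset (v : ℝ≥0∞) :
    ∑' k : ℕ, (if k ∈ Finset.Ico n (n + N n) then v else 0) = (N n) * v := by
  rw [tsum_eq_sum (s := Finset.Ico n (n + N n)) (by intro b hb; simp [hb]),
    Finset.sum_ite_of_true (fun k hk => hk), Finset.sum_const, Nat.card_Ico, nsmul_eq_mul]
  congr 2
  omega

lemma ofReal_mixP (hp : IsProbDist p) (hδ : 0 ≤ δ n) (hε : (N n : ℝ) * δ n ≤ 1) (k : ℕ) :
    ENNReal.ofReal (mixP p N δ n k) =
      ENNReal.ofReal (1 - (N n : ℝ) * δ n) * ENNReal.ofReal (p k) +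
        (if k ∈ Finset.Ico n (n + N n) then ENNReal.ofReal (δ n) else 0) := by
  unfold mixP
  rw [ENNReal.ofReal_add (mul_nonneg (by linarith) (hp.1 k)) (by positivity),
    ENNReal.ofReal_mul (by linarith)]
  congr 1
  split_ifs <;> simp

lemma renyi_mixP_upper (hα0 : 0 < α) (hα1 : α ≤ 1) (hp : IsProbDist p)
    (hδ : 0 ≤ δ n) (hε : (N n : ℝ) * δ n ≤ 1) :
    renyiSum (mixP p N δ n) α ≤
      ENNReal.ofReal (1 - (N n : ℝ) * δ n) ^ α * (∑' k, (ENNReal.ofReal (p k)) ^ α) +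
        (N n) * ENNReal.ofReal (δ n) ^ α := by
  rw [renyiSum_eq (mixP_nonneg hp hδ hε) hα0]
  have step : ∀ k, (ENNReal.ofReal (mixP p N δ n k)) ^ α ≤
      ENNReal.ofReal (1 - (N n : ℝ) * δ n) ^ α * (ENNReal.ofReal (p k)) ^ α +
        (if k ∈ Finset.Ico n (n + N n) then ENNReal.ofReal (δ n) ^ α else 0) := by
    intro k
    rw [ofReal_mixP hp hδ hε k]
    refine (ENNReal.rpow_add_le_add_rpow _ _ hα0.le hα1).trans ?_
    rw [ENNReal.mul_rpow_of_nonneg _ _ hα0.le]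
    gcongr
    split_ifs
    · exact le_rfl
    · exact le_of_eq (ENNReal.zero_rpow_of_pos hα0)
  refine (ENNReal.tsum_le_tsum step).trans ?_
  rw [ENNReal.tsum_add, ENNReal.tsum_mul_left, tsum_ite_finset]

lemma renyi_mixP_lower (hα0 : 0 < α) (hα1 : α ≤ 1) (hp : IsProbDist p)
    (hδ : 0 ≤ δ n) (hε : (N n : ℝ) * δ n ≤ 1) :
    ENNReal.ofReal (1 - (N n : ℝ) * δ n) ^ α * (∑' k, (ENNReal.ofReal (p k)) ^ α) +
        (N n) * ENNReal.ofReal (δ n) ^ α ≤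
      renyiSum (mixP p N δ n) α + (∑' i, (ENNReal.ofReal (p (i + n))) ^ α) := by
  classical
  have hsum_g1 : ∑' k : ℕ, (if k ∈ Finset.Ico n (n + N n)
      then ENNReal.ofReal (δ n) ^ α else 0) = (N n) * ENNReal.ofReal (δ n) ^ α :=
    tsum_ite_finset _
  have hsplit : ∀ k : ℕ, (ENNReal.ofReal (1 - (N n : ℝ) * δ n) * ENNReal.ofReal (p k)) ^ α =
      (if k ∈ Finset.Ico n (n + N n) then 0
        else (ENNReal.ofReal (1 - (N n : ℝ) * δ n) * ENNReal.ofReal (p k)) ^ α) +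
      (if k ∈ Finset.Ico n (n + N n)
        then (ENNReal.ofReal (1 - (N n : ℝ) * δ n) * ENNReal.ofReal (p k)) ^ α else 0) := by
    intro k; split_ifs <;> simp
  have hT : ∑' k : ℕ, (if k ∈ Finset.Ico n (n + N n)
      then (ENNReal.ofReal (1 - (N n : ℝ) * δ n) * ENNReal.ofReal (p k)) ^ α else 0) ≤
      ∑' i, (ENNReal.ofReal (p (i + n))) ^ α := by
    rw [tsum_eq_sum (s := Finset.Ico n (n + N n)) (by intro b hb; simp [hb]),
      Finset.sum_ite_of_true (fun k hk => hk), Finset.sum_Ico_eq_sum_range]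
    refine le_trans (Finset.sum_le_sum
      (g := fun j => (ENNReal.ofReal (p (n + j))) ^ α) ?_) ?_
    · intro j _
      refine ENNReal.rpow_le_rpow ?_ hα0.le
      calc ENNReal.ofReal (1 - (N n : ℝ) * δ n) * ENNReal.ofReal (p (n + j))
          ≤ 1 * ENNReal.ofReal (p (n + j)) := by
            gcongr
            refine ENNReal.ofReal_le_one.2 ?_
            have := mul_nonneg (Nat.cast_nonneg (N n) : (0:ℝ) ≤ N n) hδ
            linarith
        _ = ENNReal.ofReal (p (n + j)) := one_mul _
    · have hre : ∀ j ∈ Finset.range (n + N n - n), (ENNReal.ofReal (p (n + j))) ^ α =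
          (fun i => (ENNReal.ofReal (p (i + n))) ^ α) j := by
        intro j _; rw [Nat.add_comm]
      rw [Finset.sum_congr rfl hre]
      exact ENNReal.sum_le_tsum _
  have hmain : ∀ k : ℕ, (if k ∈ Finset.Ico n (n + N n)
        then ENNReal.ofReal (δ n) ^ α else 0) +
      (if k ∈ Finset.Ico n (n + N n) then 0
        else (ENNReal.ofReal (1 - (N n : ℝ) * δ n) * ENNReal.ofReal (p k)) ^ α) ≤
      (ENNReal.ofReal (mixP p N δ n k)) ^ α := by
    intro k
    rw [ofReal_mixP hp hδ hε k]
    by_cases hk : k ∈ Finset.Ico n (n + N n)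
    · simp only [if_pos hk, add_zero]
      exact ENNReal.rpow_le_rpow le_add_self hα0.le
    · rw [if_neg hk, if_neg hk, if_neg hk]
      simp
  calc ENNReal.ofReal (1 - (N n : ℝ) * δ n) ^ α * (∑' k, (ENNReal.ofReal (p k)) ^ α) +
        (N n) * ENNReal.ofReal (δ n) ^ α
      = (∑' k, (ENNReal.ofReal (1 - (N n : ℝ) * δ n) * ENNReal.ofReal (p k)) ^ α) +
        ∑' k : ℕ, (if k ∈ Finset.Ico n (n + N n)
          then ENNReal.ofReal (δ n) ^ α else 0) := by
        rw [hsum_g1]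
        congr 1
        rw [← ENNReal.tsum_mul_left]
        exact tsum_congr fun k => (ENNReal.mul_rpow_of_nonneg _ _ hα0.le).symm
    _ = ((∑' k : ℕ, (if k ∈ Finset.Ico n (n + N n) then 0
            else (ENNReal.ofReal (1 - (N n : ℝ) * δ n) * ENNReal.ofReal (p k)) ^ α)) +
          ∑' k : ℕ, (if k ∈ Finset.Ico n (n + N n)
            then (ENNReal.ofReal (1 - (N n : ℝ) * δ n) * ENNReal.ofReal (p k)) ^ α else 0)) +
        ∑' k : ℕ, (if k ∈ Finset.Ico n (n + N n)
          then ENNReal.ofReal (δ n) ^ α else 0) := by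
        congr 1
        rw [← ENNReal.tsum_add]
        exact tsum_congr hsplit
    _ ≤ ((∑' k : ℕ, (if k ∈ Finset.Ico n (n + N n) then 0
            else (ENNReal.ofReal (1 - (N n : ℝ) * δ n) * ENNReal.ofReal (p k)) ^ α)) +
          ∑' i, (ENNReal.ofReal (p (i + n))) ^ α) +
        ∑' k : ℕ, (if k ∈ Finset.Ico n (n + N n)
          then ENNReal.ofReal (δ n) ^ α else 0) :=
        add_le_add_left (add_le_add_right hT _) _
    _ = ((∑' k : ℕ, (if k ∈ Finset.Ico n (n + N n)
            then ENNReal.ofReal (δ n) ^ α else 0)) +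
          ∑' k : ℕ, (if k ∈ Finset.Ico n (n + N n) then 0
            else (ENNReal.ofReal (1 - (N n : ℝ) * δ n) * ENNReal.ofReal (p k)) ^ α)) +
        ∑' i, (ENNReal.ofReal (p (i + n))) ^ α := by ring
    _ ≤ (∑' k, (ENNReal.ofReal (mixP p N δ n k)) ^ α) +
        ∑' i, (ENNReal.ofReal (p (i + n))) ^ α := by
        gcongr
        rw [← ENNReal.tsum_add]
        exact ENNReal.tsum_le_tsum hmain
    _ = renyiSum (mixP p N δ n) α + ∑' i, (ENNReal.ofReal (p (i + n))) ^ α := by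
        rw [renyiSum_eq (mixP_nonneg hp hδ hε) hα0]
end

section
variable {p : ℕ → ℝ} {N : ℕ → ℕ} {δ : ℕ → ℝ} {n : ℕ}

lemma shannon_eq (q : ℕ → ℝ) :
    shannonEntropy q = ∑' k, ENNReal.ofReal (Real.negMulLog (q k)) := by
  unfold shannonEntropy
  exact tsum_congr fun k => by rw [Real.negMulLog_eq_neg]

lemma neg_log_nonneg_of_le_one {c : ℝ} (h0 : 0 ≤ c) (h : c ≤ 1) : 0 ≤ -Real.log c := by
  simp only [neg_nonneg]
  exact Real.log_nonpos h0 h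

lemma shannon_mixP_upper (hp : IsProbDist p)
    (hδ0 : 0 ≤ δ n) (hδ1 : δ n ≤ 1) (hε : (N n : ℝ) * δ n ≤ 1/2) :
    shannonEntropy (mixP p N δ n) ≤
      ENNReal.ofReal (1 - (N n : ℝ) * δ n) * shannonEntropy p +
        ENNReal.ofReal ((1 - (N n : ℝ) * δ n) * (- Real.log (1 - (N n : ℝ) * δ n))) +
        (N n) * ENNReal.ofReal (Real.negMulLog (δ n)) := by
  have hεnn : (0:ℝ) ≤ (N n : ℝ) * δ n := mul_nonneg (Nat.cast_nonneg _) hδ0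
  set c : ℝ := 1 - (N n : ℝ) * δ n with hc
  have hc0 : 0 < c := by rw [hc]; linarith
  have hc1 : c ≤ 1 := by rw [hc]; linarith
  have hL : 0 ≤ -Real.log c := neg_log_nonneg_of_le_one hc0.le hc1
  rw [shannon_eq, shannon_eq]
  have step : ∀ k, ENNReal.ofReal (Real.negMulLog (mixP p N δ n k)) ≤
      (ENNReal.ofReal (c * Real.negMulLog (p k)) +
        ENNReal.ofReal (p k * (c * (-Real.log c)))) +
      (if k ∈ Finset.Ico n (n + N n) then ENNReal.ofReal (Real.negMulLog (δ n)) else 0) := by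
    intro k
    have h1 : Real.negMulLog (mixP p N δ n k) ≤
        Real.negMulLog (c * p k) +
          Real.negMulLog (if k ∈ Finset.Ico n (n + N n) then δ n else 0) := by
      unfold mixP
      rw [← hc]
      exact negMulLog_subadd (mul_nonneg hc0.le (hp.1 k)) (by positivity)
    have h2 : Real.negMulLog (c * p k) =
        c * Real.negMulLog (p k) + p k * (c * (-Real.log c)) := negMulLog_scale
    calc ENNReal.ofReal (Real.negMulLog (mixP p N δ n k)) ≤
          ENNReal.ofReal ((c * Real.negMulLog (p k) + p k * (c * (-Real.log c))) +
            Real.negMulLog (if k ∈ Finset.Ico n (n + N n) then δ n else 0)) := by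
            apply ENNReal.ofReal_le_ofReal
            rw [← h2]; exact h1
      _ ≤ ENNReal.ofReal (c * Real.negMulLog (p k) + p k * (c * (-Real.log c))) +
            ENNReal.ofReal (Real.negMulLog
              (if k ∈ Finset.Ico n (n + N n) then δ n else 0)) := ENNReal.ofReal_add_le
      _ ≤ (ENNReal.ofReal (c * Real.negMulLog (p k)) +
            ENNReal.ofReal (p k * (c * (-Real.log c)))) +
          (if k ∈ Finset.Ico n (n + N n) then
            ENNReal.ofReal (Real.negMulLog (δ n)) else 0) := by
            gcongr
            · exact ENNReal.ofReal_add_le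
            · split_ifs <;> simp
  refine (ENNReal.tsum_le_tsum step).trans ?_
  rw [ENNReal.tsum_add, ENNReal.tsum_add, tsum_ite_finset]
  gcongr
  · refine le_of_eq ?_
    calc ∑' k, ENNReal.ofReal (c * Real.negMulLog (p k))
        = ∑' k, ENNReal.ofReal c * ENNReal.ofReal (Real.negMulLog (p k)) :=
          tsum_congr fun k => ENNReal.ofReal_mul hc0.le
      _ = ENNReal.ofReal c * ∑' k, ENNReal.ofReal (Real.negMulLog (p k)) :=
          ENNReal.tsum_mul_left
  · refine le_of_eq ?_
    calc ∑' k, ENNReal.ofReal (p k * (c * (-Real.log c)))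
        = ∑' k, ENNReal.ofReal (p k) * ENNReal.ofReal (c * (-Real.log c)) :=
          tsum_congr fun k => ENNReal.ofReal_mul (hp.1 k)
      _ = (∑' k, ENNReal.ofReal (p k)) * ENNReal.ofReal (c * (-Real.log c)) :=
          ENNReal.tsum_mul_right
      _ = ENNReal.ofReal (c * (-Real.log c)) := by rw [tsum_ofReal_prob hp, one_mul]
end


section
variable {p : ℕ → ℝ} {N : ℕ → ℕ} {δ : ℕ → ℝ} {n : ℕ}

lemma shannon_mixP_lower (hp : IsProbDist p)
    (hδ0 : 0 ≤ δ n) (hδ1 : δ n ≤ 1) (hε : (N n : ℝ) * δ n ≤ 1/2) :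
    ENNReal.ofReal (1 - (N n : ℝ) * δ n) * shannonEntropy p +
        (N n) * ENNReal.ofReal (Real.negMulLog (δ n)) ≤
      shannonEntropy (mixP p N δ n) +
        ((∑' i, ENNReal.ofReal (p (i + n))) + ENNReal.ofReal ((N n : ℝ) * δ n)) *
          ENNReal.ofReal (2 * (Real.exp 1)⁻¹) := by
  classical
  have hεnn : (0:ℝ) ≤ (N n : ℝ) * δ n := mul_nonneg (Nat.cast_nonneg _) hδ0
  have hε1 : (N n : ℝ) * δ n ≤ 1 := by linarith
  set c : ℝ := 1 - (N n : ℝ) * δ n with hc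
  have hc0 : 0 < c := by rw [hc]; linarith
  have hc1 : c ≤ 1 := by rw [hc]; linarith
  set K : ℝ := 2 * (Real.exp 1)⁻¹ with hK
  have hK0 : 0 ≤ K := by positivity
  have hfp : ∀ k, 0 ≤ Real.negMulLog (p k) :=
    fun k => Real.negMulLog_nonneg (hp.1 k) (prob_le_one hp k)
  have hfδ : 0 ≤ Real.negMulLog (δ n) := Real.negMulLog_nonneg hδ0 hδ1
  have hmixB : ∀ k ∈ Finset.Ico n (n + N n), mixP p N δ n k = c * p k + δ n := by
    intro k hk; unfold mixP; rw [if_pos hk, ← hc]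
  have hmain : ∀ k : ℕ,
      (if k ∈ Finset.Ico n (n + N n) then ENNReal.ofReal (Real.negMulLog (δ n)) else 0) +
        ENNReal.ofReal (c * Real.negMulLog (p k)) ≤
      ENNReal.ofReal (Real.negMulLog (mixP p N δ n k)) +
        (if k ∈ Finset.Ico n (n + N n)
          then ENNReal.ofReal (mixP p N δ n k * K) else 0) := by
    intro k
    have hscale : Real.negMulLog (c * p k) =
        c * Real.negMulLog (p k) + p k * (c * (-Real.log c)) := negMulLog_scale
    have hcfp : c * Real.negMulLog (p k) ≤ Real.negMulLog (c * p k) := by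
      rw [hscale]
      have : 0 ≤ p k * (c * (-Real.log c)) :=
        mul_nonneg (hp.1 k) (mul_nonneg hc0.le (by
          simpa only [neg_nonneg] using Real.log_nonpos hc0.le hc1))
      linarith
    by_cases hk : k ∈ Finset.Ico n (n + N n)
    · rw [if_pos hk, if_pos hk, hmixB k hk]
      have hreal : Real.negMulLog (δ n) + c * Real.negMulLog (p k) ≤
          Real.negMulLog (c * p k + δ n) + (c * p k + δ n) * K := by
        have h := negMulLog_superadd (mul_nonneg hc0.le (hp.1 k)) hδ0
        rw [← hK] at h
        linarith
      calc ENNReal.ofReal (Real.negMulLog (δ n)) + ENNReal.ofReal (c * Real.negMulLog (p k))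
          = ENNReal.ofReal (Real.negMulLog (δ n) + c * Real.negMulLog (p k)) :=
            (ENNReal.ofReal_add hfδ (mul_nonneg hc0.le (hfp k))).symm
        _ ≤ ENNReal.ofReal (Real.negMulLog (c * p k + δ n) + (c * p k + δ n) * K) :=
            ENNReal.ofReal_le_ofReal hreal
        _ ≤ ENNReal.ofReal (Real.negMulLog (c * p k + δ n)) +
              ENNReal.ofReal ((c * p k + δ n) * K) := ENNReal.ofReal_add_le
    · rw [if_neg hk, if_neg hk, zero_add, add_zero]
      have : mixP p N δ n k = c * p k := by
        unfold mixP; rw [if_neg hk, ← hc, add_zero]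
      rw [this]
      exact ENNReal.ofReal_le_ofReal hcfp
  have hbound : ∑' k : ℕ, (if k ∈ Finset.Ico n (n + N n)
        then ENNReal.ofReal (mixP p N δ n k * K) else 0) ≤
      ((∑' i, ENNReal.ofReal (p (i + n))) + ENNReal.ofReal ((N n : ℝ) * δ n)) *
        ENNReal.ofReal K := by
    rw [tsum_eq_sum (s := Finset.Ico n (n + N n)) (by intro b hb; simp [hb]),
      Finset.sum_ite_of_true (fun k hk => hk)]
    have h1 : ∀ k ∈ Finset.Ico n (n + N n), ENNReal.ofReal (mixP p N δ n k * K) =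
        ENNReal.ofReal (mixP p N δ n k) * ENNReal.ofReal K :=
      fun k hk => ENNReal.ofReal_mul (mixP_nonneg hp hδ0 hε1 k)
    rw [Finset.sum_congr rfl h1, ← Finset.sum_mul]
    refine mul_le_mul_left ?_ _
    have h2 : ∀ k ∈ Finset.Ico n (n + N n), ENNReal.ofReal (mixP p N δ n k) ≤
        ENNReal.ofReal (p k) + ENNReal.ofReal (δ n) := by
      intro k hk
      rw [hmixB k hk]
      refine le_trans (ENNReal.ofReal_le_ofReal ?_) ENNReal.ofReal_add_le
      have : c * p k ≤ p k := by
        nlinarith [hp.1 k]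
      linarith
    refine le_trans (Finset.sum_le_sum h2) ?_
    rw [Finset.sum_add_distrib, Finset.sum_const, Nat.card_Ico, nsmul_eq_mul]
    have h3 : ∑ k ∈ Finset.Ico n (n + N n), ENNReal.ofReal (p k) ≤
        ∑' i, ENNReal.ofReal (p (i + n)) := by
      rw [Finset.sum_Ico_eq_sum_range]
      have hre : ∀ j ∈ Finset.range (n + N n - n), ENNReal.ofReal (p (n + j)) =
          (fun i => ENNReal.ofReal (p (i + n))) j := by
        intro j _; rw [Nat.add_comm]
      rw [Finset.sum_congr rfl hre]
      exact ENNReal.sum_le_tsum _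
    have h4 : ((n + N n - n : ℕ) : ℝ≥0∞) * ENNReal.ofReal (δ n) =
        ENNReal.ofReal ((N n : ℝ) * δ n) := by
      have : n + N n - n = N n := by omega
      rw [this, ENNReal.ofReal_mul (Nat.cast_nonneg _), ENNReal.ofReal_natCast]
    rw [h4]
    exact add_le_add_left h3 _
  calc ENNReal.ofReal c * shannonEntropy p + (N n) * ENNReal.ofReal (Real.negMulLog (δ n))
      = ∑' k : ℕ, ((if k ∈ Finset.Ico n (n + N n)
            then ENNReal.ofReal (Real.negMulLog (δ n)) else 0) +
          ENNReal.ofReal (c * Real.negMulLog (p k))) := by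
        rw [ENNReal.tsum_add, tsum_ite_finset, shannon_eq]
        rw [add_comm (ENNReal.ofReal c * _)]
        congr 1
        rw [← ENNReal.tsum_mul_left]
        exact tsum_congr fun k => (ENNReal.ofReal_mul hc0.le).symm
    _ ≤ ∑' k : ℕ, (ENNReal.ofReal (Real.negMulLog (mixP p N δ n k)) +
          (if k ∈ Finset.Ico n (n + N n)
            then ENNReal.ofReal (mixP p N δ n k * K) else 0)) :=
        ENNReal.tsum_le_tsum hmain
    _ = shannonEntropy (mixP p N δ n) + ∑' k : ℕ, (if k ∈ Finset.Ico n (n + N n)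
          then ENNReal.ofReal (mixP p N δ n k * K) else 0) := by
        rw [ENNReal.tsum_add, shannon_eq]
    _ ≤ shannonEntropy (mixP p N δ n) +
        ((∑' i, ENNReal.ofReal (p (i + n))) + ENNReal.ofReal ((N n : ℝ) * δ n)) *
          ENNReal.ofReal K := add_le_add_right hbound _
end

lemma ennreal_squeeze {H A D U : ℕ → ℝ≥0∞} {l : ℝ≥0∞} (hl : l ≠ ⊤)
    (h1 : ∀ᶠ n in atTop, A n ≤ H n + D n) (h2 : ∀ᶠ n in atTop, H n ≤ U n)
    (hA : Tendsto A atTop (𝓝 l)) (hD : Tendsto D atTop (𝓝 0))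
    (hU : Tendsto U atTop (𝓝 l)) : Tendsto H atTop (𝓝 l) := by
  have hlow : Tendsto (fun n => A n - D n) atTop (𝓝 (l - 0)) :=
    ENNReal.Tendsto.sub hA hD (Or.inl hl)
  rw [tsub_zero] at hlow
  refine tendsto_of_tendsto_of_tendsto_of_le_of_le' hlow hU ?_ h2
  filter_upwards [h1] with n hn
  exact tsub_le_iff_right.2 hn

lemma ennreal_squeeze_top {H A D : ℕ → ℝ≥0∞}
    (h1 : ∀ᶠ n in atTop, A n ≤ H n + D n)
    (hA : Tendsto A atTop (𝓝 ⊤)) (hD : Tendsto D atTop (𝓝 0)) :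
    Tendsto H atTop (𝓝 ⊤) := by
  rw [ENNReal.tendsto_nhds_top_iff_nat]
  intro m
  have h2 : ∀ᶠ n in atTop, D n ≤ 1 :=
    hD.eventually (eventually_le_nhds (by norm_num : (0:ℝ≥0∞) < 1))
  have h3 : ∀ᶠ n in atTop, ((m:ℝ≥0∞) + 1) + 1 ≤ A n := by
    have : Set.Ioi ((m:ℝ≥0∞) + 1 + 1) ∈ 𝓝 (⊤:ℝ≥0∞) :=
      Ioi_mem_nhds (lt_top_iff_ne_top.2 (by simp [ENNReal.add_eq_top]))
    filter_upwards [hA.eventually this] with n hn using (le_of_lt hn)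
  filter_upwards [h1, h2, h3] with n e1 e2 e3
  have : (m:ℝ≥0∞) + 1 + 1 ≤ H n + 1 := e3.trans (e1.trans (by gcongr))
  have h4 : (m:ℝ≥0∞) + 1 ≤ H n := by
    exact ENNReal.le_of_add_le_add_right (by norm_num) this
  calc (m:ℝ≥0∞) < m + 1 := by
        refine ENNReal.lt_add_right ?_ one_ne_zero
        simp
  _ ≤ H n := h4


section
variable {α : ℝ} {p : ℕ → ℝ} {N : ℕ → ℕ} {δ : ℕ → ℝ}

lemma tendsto_renyiSum_mixSeq (hα0 : 0 < α) (hα1 : α ≤ 1) (hp : IsProbDist p)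
    (hS : renyiSum p α ≠ ⊤) (hδ0 : ∀ n, 0 ≤ δ n)
    (hε : Tendsto (fun n => (N n : ℝ) * δ n) atTop (𝓝 0)) (C : ℝ≥0∞)
    (hC : Tendsto (fun n => (N n : ℝ≥0∞) * ENNReal.ofReal (δ n) ^ α) atTop (𝓝 C)) :
    Tendsto (fun n => renyiSum (mixSeq p N δ n) α) atTop (𝓝 (renyiSum p α + C)) ∧
      ∀ n, renyiSum (mixSeq p N δ n) α ≠ ⊤ := by
  have hS' : (∑' k, (ENNReal.ofReal (p k)) ^ α) ≠ ⊤ := by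
    rwa [← renyiSum_eq hp.1 hα0]
  have hc' : Tendsto (fun n => ENNReal.ofReal (1 - (N n : ℝ) * δ n) ^ α) atTop (𝓝 1) := by
    have h0 : Tendsto (fun n => (1 : ℝ) - (N n : ℝ) * δ n) atTop (𝓝 1) := by
      simpa using (tendsto_const_nhds (x := (1:ℝ))).sub hε
    have h1 : Tendsto (fun n => ENNReal.ofReal (1 - (N n : ℝ) * δ n)) atTop (𝓝 1) := by
      simpa using ENNReal.tendsto_ofReal h0
    have := (ENNReal.continuous_rpow_const (y := α)).tendsto 1
    simpa [ENNReal.one_rpow, Function.comp_def] using this.comp h1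
  have hT : Tendsto (fun n => ∑' i, (ENNReal.ofReal (p (i + n))) ^ α) atTop (𝓝 0) :=
    ENNReal.tendsto_sum_nat_add _ hS'
  have hA : Tendsto (fun n => ENNReal.ofReal (1 - (N n : ℝ) * δ n) ^ α *
      (∑' k, (ENNReal.ofReal (p k)) ^ α) + (N n : ℝ≥0∞) * ENNReal.ofReal (δ n) ^ α)
      atTop (𝓝 ((∑' k, (ENNReal.ofReal (p k)) ^ α) + C)) := by
    have h1 := ENNReal.Tendsto.mul_const (b := ∑' k, (ENNReal.ofReal (p k)) ^ α) hc' (Or.inl one_ne_zero)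
    rw [one_mul] at h1
    exact h1.add hC
  have hfin : ∀ n, renyiSum (mixSeq p N δ n) α ≠ ⊤ := by
    intro n
    unfold mixSeq
    split_ifs with h
    · refine ne_top_of_le_ne_top ?_ (renyi_mixP_upper hα0 hα1 hp (hδ0 n) (by linarith))
      refine ENNReal.add_ne_top.2 ⟨ENNReal.mul_ne_top ?_ hS', ENNReal.mul_ne_top ?_ ?_⟩
      · exact ENNReal.rpow_ne_top_of_nonneg hα0.le ENNReal.ofReal_ne_top
      · simp
      · exact ENNReal.rpow_ne_top_of_nonneg hα0.le ENNReal.ofReal_ne_top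
    · exact hS
  constructor
  · have hup : ∀ᶠ n in atTop, renyiSum (mixSeq p N δ n) α ≤
        ENNReal.ofReal (1 - (N n : ℝ) * δ n) ^ α * (∑' k, (ENNReal.ofReal (p k)) ^ α) +
          (N n : ℝ≥0∞) * ENNReal.ofReal (δ n) ^ α := by
      filter_upwards [mixSeq_eventually_eq hε] with n hn
      rw [hn.1]
      exact renyi_mixP_upper hα0 hα1 hp (hδ0 n) (by linarith [hn.2])
    have hlo : ∀ᶠ n in atTop,
        ENNReal.ofReal (1 - (N n : ℝ) * δ n) ^ α * (∑' k, (ENNReal.ofReal (p k)) ^ α) +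
          (N n : ℝ≥0∞) * ENNReal.ofReal (δ n) ^ α ≤
        renyiSum (mixSeq p N δ n) α + (∑' i, (ENNReal.ofReal (p (i + n))) ^ α) := by
      filter_upwards [mixSeq_eventually_eq hε] with n hn
      rw [hn.1]
      exact renyi_mixP_lower hα0 hα1 hp (hδ0 n) (by linarith [hn.2])
    rw [renyiSum_eq hp.1 hα0]
    by_cases hCt : C = ⊤
    · subst hCt
      rw [add_top]
      refine ennreal_squeeze_top (A := fun n => (N n : ℝ≥0∞) * ENNReal.ofReal (δ n) ^ α)
        ?_ hC hT
      filter_upwards [hlo] with n hn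
      exact le_trans le_add_self hn
    · exact ennreal_squeeze (ENNReal.add_ne_top.2 ⟨hS', hCt⟩) hlo hup hA hT hA
  · exact hfin
end

lemma tendsto_renyiEntropy_of_renyiSum {α : ℝ} (hα1 : α < 1) (q : ℕ → ℕ → ℝ)
    (L : ℝ≥0∞) (hL1 : 1 ≤ L) (hfin : ∀ n, renyiSum (q n) α ≠ ⊤)
    (h : Tendsto (fun n => renyiSum (q n) α) atTop (𝓝 L)) :
    Tendsto (fun n => renyiEntropy (q n) α) atTop
      (𝓝 (if L = ⊤ then ⊤ else ENNReal.ofReal ((1 - α)⁻¹ * Real.log L.toReal))) := by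
  have hα : α ≠ 1 := ne_of_lt hα1
  have heq : ∀ n, renyiEntropy (q n) α =
      ENNReal.ofReal ((1 - α)⁻¹ * Real.log (renyiSum (q n) α).toReal) := by
    intro n
    unfold renyiEntropy
    rw [if_neg hα, if_neg (hfin n)]
  simp only [heq]
  by_cases hLt : L = ⊤
  · rw [if_pos hLt]
    subst hLt
    have htr : Tendsto (fun n => (renyiSum (q n) α).toReal) atTop atTop := by
      rw [tendsto_atTop]
      intro b
      have : Set.Ioi (ENNReal.ofReal b) ∈ 𝓝 (⊤:ℝ≥0∞) :=
        Ioi_mem_nhds (lt_top_iff_ne_top.2 ENNReal.ofReal_ne_top)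
      filter_upwards [h.eventually this] with n hn
      exact ((ENNReal.ofReal_le_iff_le_toReal (hfin n)).1 (le_of_lt hn))
    have hlog := Real.tendsto_log_atTop.comp htr
    have hmul : Tendsto (fun n => (1 - α)⁻¹ * Real.log (renyiSum (q n) α).toReal)
        atTop atTop := by
      refine Tendsto.const_mul_atTop ?_ hlog
      simp only [inv_pos]; linarith
    exact ENNReal.tendsto_ofReal_atTop.comp hmul
  · rw [if_neg hLt]
    have htr : Tendsto (fun n => (renyiSum (q n) α).toReal) atTop (𝓝 L.toReal) :=
      (ENNReal.tendsto_toReal hLt).comp h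
    have hL0 : L.toReal ≠ 0 := by
      have : (1:ℝ) ≤ L.toReal := by
        rw [← ENNReal.toReal_one]
        exact ENNReal.toReal_mono hLt hL1
      linarith
    have hlog := htr.log hL0
    exact (ENNReal.continuous_ofReal.tendsto _).comp (hlog.const_mul _)

section
variable {p : ℕ → ℝ} {N : ℕ → ℕ} {δ : ℕ → ℝ}

lemma tendsto_shannon_mixSeq (hp : IsProbDist p)
    (hH : shannonEntropy p ≠ ⊤) (hδ0 : ∀ n, 0 ≤ δ n) (hδ1 : ∀ n, δ n ≤ 1)
    (hε : Tendsto (fun n => (N n : ℝ) * δ n) atTop (𝓝 0)) (C : ℝ≥0∞)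
    (hC : Tendsto (fun n => (N n : ℝ≥0∞) * ENNReal.ofReal (Real.negMulLog (δ n)))
      atTop (𝓝 C)) :
    Tendsto (fun n => shannonEntropy (mixSeq p N δ n)) atTop
      (𝓝 (shannonEntropy p + C)) := by
  have hc' : Tendsto (fun n => ENNReal.ofReal (1 - (N n : ℝ) * δ n)) atTop (𝓝 1) := by
    have h0 : Tendsto (fun n => (1 : ℝ) - (N n : ℝ) * δ n) atTop (𝓝 1) := by
      simpa using (tendsto_const_nhds (x := (1:ℝ))).sub hε
    simpa using ENNReal.tendsto_ofReal h0
  have hcH : Tendsto (fun n => ENNReal.ofReal (1 - (N n : ℝ) * δ n) * shannonEntropy p)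
      atTop (𝓝 (shannonEntropy p)) := by
    have h1 := ENNReal.Tendsto.mul_const (b := shannonEntropy p) hc' (Or.inl one_ne_zero)
    rwa [one_mul] at h1
  have hLog : Tendsto (fun n => ENNReal.ofReal
      ((1 - (N n : ℝ) * δ n) * (- Real.log (1 - (N n : ℝ) * δ n)))) atTop (𝓝 0) := by
    have h0 : Tendsto (fun n => (1 : ℝ) - (N n : ℝ) * δ n) atTop (𝓝 1) := by
      simpa using (tendsto_const_nhds (x := (1:ℝ))).sub hε
    have h1 : Tendsto (fun n => (1 - (N n : ℝ) * δ n) * (- Real.log (1 - (N n : ℝ) * δ n)))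
        atTop (𝓝 (1 * (- Real.log 1))) := by
      exact h0.mul ((h0.log one_ne_zero).neg)
    rw [Real.log_one, neg_zero, mul_zero] at h1
    simpa using ENNReal.tendsto_ofReal h1
  have hT : Tendsto (fun n => ∑' i, ENNReal.ofReal (p (i + n))) atTop (𝓝 0) := by
    exact ENNReal.tendsto_sum_nat_add (fun k => ENNReal.ofReal (p k))
      (by rw [tsum_ofReal_prob hp]; exact ENNReal.one_ne_top)
  have hD : Tendsto (fun n => ((∑' i, ENNReal.ofReal (p (i + n))) +
      ENNReal.ofReal ((N n : ℝ) * δ n)) * ENNReal.ofReal (2 * (Real.exp 1)⁻¹))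
      atTop (𝓝 0) := by
    have h1 : Tendsto (fun n => (∑' i, ENNReal.ofReal (p (i + n))) +
        ENNReal.ofReal ((N n : ℝ) * δ n)) atTop (𝓝 0) := by
      have h2 : Tendsto (fun n => ENNReal.ofReal ((N n : ℝ) * δ n)) atTop (𝓝 0) := by
        simpa using ENNReal.tendsto_ofReal hε
      simpa using hT.add h2
    have h3 := ENNReal.Tendsto.mul_const (b := ENNReal.ofReal (2 * (Real.exp 1)⁻¹)) h1
      (Or.inr ENNReal.ofReal_ne_top)
    rwa [zero_mul] at h3
  have hA : Tendsto (fun n => ENNReal.ofReal (1 - (N n : ℝ) * δ n) * shannonEntropy p +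
      (N n : ℝ≥0∞) * ENNReal.ofReal (Real.negMulLog (δ n))) atTop
      (𝓝 (shannonEntropy p + C)) := hcH.add hC
  have hlo : ∀ᶠ n in atTop,
      ENNReal.ofReal (1 - (N n : ℝ) * δ n) * shannonEntropy p +
        (N n : ℝ≥0∞) * ENNReal.ofReal (Real.negMulLog (δ n)) ≤
      shannonEntropy (mixSeq p N δ n) +
        ((∑' i, ENNReal.ofReal (p (i + n))) + ENNReal.ofReal ((N n : ℝ) * δ n)) *
          ENNReal.ofReal (2 * (Real.exp 1)⁻¹) := by
    filter_upwards [mixSeq_eventually_eq hε] with n hn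
    rw [hn.1]
    exact shannon_mixP_lower hp (hδ0 n) (hδ1 n) hn.2
  by_cases hCt : C = ⊤
  · subst hCt
    rw [add_top]
    refine ennreal_squeeze_top
      (A := fun n => (N n : ℝ≥0∞) * ENNReal.ofReal (Real.negMulLog (δ n))) ?_ hC hD
    filter_upwards [hlo] with n hn
    exact le_trans le_add_self hn
  · have hup : ∀ᶠ n in atTop, shannonEntropy (mixSeq p N δ n) ≤
        ENNReal.ofReal (1 - (N n : ℝ) * δ n) * shannonEntropy p +
          ENNReal.ofReal ((1 - (N n : ℝ) * δ n) * (- Real.log (1 - (N n : ℝ) * δ n))) +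
          (N n : ℝ≥0∞) * ENNReal.ofReal (Real.negMulLog (δ n)) := by
      filter_upwards [mixSeq_eventually_eq hε] with n hn
      rw [hn.1]
      exact shannon_mixP_upper hp (hδ0 n) (hδ1 n) hn.2
    have hU : Tendsto (fun n =>
        ENNReal.ofReal (1 - (N n : ℝ) * δ n) * shannonEntropy p +
          ENNReal.ofReal ((1 - (N n : ℝ) * δ n) * (- Real.log (1 - (N n : ℝ) * δ n))) +
          (N n : ℝ≥0∞) * ENNReal.ofReal (Real.negMulLog (δ n))) atTop
        (𝓝 (shannonEntropy p + C)) := by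
      have := (hcH.add hLog).add hC
      rwa [add_zero] at this
    exact ennreal_squeeze (ENNReal.add_ne_top.2 ⟨hH, hCt⟩) hlo hup hA hD hU
end

lemma renyi_params_gen {α : ℝ} (hα0 : 0 < α) (hα1 : α < 1) (c : ℕ → ℝ)
    (hc : ∀ n, 0 < c n) :
    ∃ N : ℕ → ℕ, ∃ δ : ℕ → ℝ, (∀ n, 0 ≤ δ n) ∧ (∀ n, δ n ≤ 1) ∧
      Tendsto (fun n => (N n : ℝ) * δ n) atTop (𝓝 0) ∧
      Tendsto (fun n => δ n ^ α) atTop (𝓝 0) ∧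
      (∀ n, c n ≤ (N n : ℝ) * δ n ^ α ∧ (N n : ℝ) * δ n ^ α ≤ c n + δ n ^ α) ∧
      (∀ n, (N n : ℝ≥0∞) * ENNReal.ofReal (δ n) ^ α =
        ENNReal.ofReal ((N n : ℝ) * δ n ^ α)) := by
  have hβ0 : 0 < (1 - α)⁻¹ := by simp only [inv_pos]; linarith
  set β : ℝ := (1 - α)⁻¹ with hβ
  have hu0 : ∀ n : ℕ, 0 < (((n : ℝ) + 1) * (c n + 1))⁻¹ := by
    intro n; have := hc n; positivity
  have hu1 : ∀ n : ℕ, (((n : ℝ) + 1) * (c n + 1))⁻¹ ≤ 1 := by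
    intro n
    exact inv_le_one_of_one_le₀ (by nlinarith [hc n, (Nat.cast_nonneg n : (0:ℝ) ≤ n)])
  have huB : ∀ n : ℕ, (((n : ℝ) + 1) * (c n + 1))⁻¹ ≤ 1/((n:ℝ)+1) := by
    intro n
    rw [mul_inv, one_div]
    have h1 : (c n + 1)⁻¹ ≤ 1 := inv_le_one_of_one_le₀ (by linarith [hc n])
    calc ((n:ℝ)+1)⁻¹ * (c n + 1)⁻¹ ≤ ((n:ℝ)+1)⁻¹ * 1 :=
          mul_le_mul_of_nonneg_left h1 (by positivity)
    _ = ((n:ℝ)+1)⁻¹ := mul_one _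
  have hutend : Tendsto (fun n : ℕ => (((n : ℝ) + 1) * (c n + 1))⁻¹) atTop (𝓝 0) :=
    squeeze_zero (fun n => (hu0 n).le) huB tendsto_one_div_add_atTop_nhds_zero_nat
  refine ⟨fun n => ⌈c n / ((((n : ℝ) + 1) * (c n + 1))⁻¹ ^ β) ^ α⌉₊,
    fun n => (((n : ℝ) + 1) * (c n + 1))⁻¹ ^ β, ?_, ?_, ?_, ?_, ?_, ?_⟩
  all_goals
    set u : ℕ → ℝ := fun n => (((n : ℝ) + 1) * (c n + 1))⁻¹ with hu
  · exact fun n => (Real.rpow_pos_of_pos (hu0 n) _).le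
  · exact fun n => Real.rpow_le_one (hu0 n).le (hu1 n) hβ0.le
  · -- ε → 0
    have hδα : ∀ n, (u n ^ β) ^ α = u n ^ (β * α) := fun n =>
      (Real.rpow_mul (hu0 n).le β α).symm
    have hsand : ∀ n : ℕ, (⌈c n / (u n ^ β) ^ α⌉₊ : ℝ) * (u n ^ β) ≤
        1/((n:ℝ)+1) + (u n ^ β) ^ α := by
      intro n
      have hδpos : 0 < u n ^ β := Real.rpow_pos_of_pos (hu0 n) _
      have hδαpos : 0 < (u n ^ β) ^ α := Real.rpow_pos_of_pos hδpos _
      have hx0 : 0 ≤ c n / (u n ^ β) ^ α := div_nonneg (hc n).le hδαpos.le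
      have hceil : (⌈c n / (u n ^ β) ^ α⌉₊ : ℝ) < c n / (u n ^ β) ^ α + 1 :=
        Nat.ceil_lt_add_one hx0
      have h1a : (u n ^ β) ^ (1 - α) = u n := by
        rw [← Real.rpow_mul (hu0 n).le]
        rw [hβ, inv_mul_cancel₀ (by linarith : (1:ℝ) - α ≠ 0), Real.rpow_one]
      have hquot : u n ^ β / (u n ^ β) ^ α = u n := by
        have h2 : (u n ^ β) ^ ((1:ℝ) - α) = (u n ^ β) ^ (1:ℝ) / (u n ^ β) ^ α :=
          Real.rpow_sub hδpos 1 α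
        rw [Real.rpow_one] at h2
        rw [← h2, h1a]
      calc (⌈c n / (u n ^ β) ^ α⌉₊ : ℝ) * (u n ^ β)
          ≤ (c n / (u n ^ β) ^ α + 1) * (u n ^ β) :=
            mul_le_mul_of_nonneg_right hceil.le hδpos.le
        _ = c n * (u n ^ β / (u n ^ β) ^ α) + u n ^ β := by ring
        _ = c n * u n + u n ^ β := by rw [hquot]
        _ ≤ 1/((n:ℝ)+1) + (u n ^ β) ^ α := by
            gcongr
            · -- c n * u n ≤ 1/(n+1)
              have h2 : c n * u n ≤ 1 * ((n:ℝ)+1)⁻¹ := by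
                show c n * (((n : ℝ) + 1) * (c n + 1))⁻¹ ≤ 1 * ((n:ℝ)+1)⁻¹
                rw [mul_inv]
                calc c n * (((n:ℝ)+1)⁻¹ * (c n + 1)⁻¹)
                    = (c n * (c n + 1)⁻¹) * ((n:ℝ)+1)⁻¹ := by ring
                  _ ≤ 1 * ((n:ℝ)+1)⁻¹ :=
                      mul_le_mul_of_nonneg_right
                        (mul_inv_le_one_of_le₀ (by linarith [hc n]) (by linarith [hc n]))
                        (by positivity)
              rwa [one_mul, ← one_div] at h2
            · -- u n ^ β ≤ (u n ^ β)^α : since base ≤ 1, exponent α ≤ 1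
              have hb1 : u n ^ β ≤ 1 := Real.rpow_le_one (hu0 n).le (hu1 n) hβ0.le
              have hb0 : 0 < u n ^ β := Real.rpow_pos_of_pos (hu0 n) _
              calc u n ^ β = (u n ^ β) ^ (1:ℝ) := (Real.rpow_one _).symm
                _ ≤ (u n ^ β) ^ α := Real.rpow_le_rpow_of_exponent_ge hb0 hb1 hα1.le
    have hδαtend : Tendsto (fun n => (u n ^ β) ^ α) atTop (𝓝 0) := by
      have hcont : Tendsto (fun x : ℝ => x ^ (β * α)) (𝓝 0) (𝓝 ((0:ℝ) ^ (β * α))) :=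
        (Real.continuousAt_rpow_const 0 (β * α) (Or.inr (by positivity))).tendsto
      have h0 : ((0:ℝ) ^ (β * α)) = 0 := Real.zero_rpow (by positivity)
      have := hcont.comp hutend
      rw [h0] at this
      refine this.congr fun n => ?_
      exact (Real.rpow_mul (hu0 n).le β α)
    have hub : Tendsto (fun n : ℕ => 1/((n:ℝ)+1) + (u n ^ β) ^ α) atTop (𝓝 0) := by
      simpa using tendsto_one_div_add_atTop_nhds_zero_nat.add hδαtend
    refine squeeze_zero (fun n => ?_) hsand hub
    exact mul_nonneg (Nat.cast_nonneg _) (Real.rpow_pos_of_pos (hu0 n) _).le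
  · -- δ ^ α → 0  (same as hδαtend above)
    have hcont : Tendsto (fun x : ℝ => x ^ (β * α)) (𝓝 0) (𝓝 ((0:ℝ) ^ (β * α))) :=
      (Real.continuousAt_rpow_const 0 (β * α) (Or.inr (by positivity))).tendsto
    have h0 : ((0:ℝ) ^ (β * α)) = 0 := Real.zero_rpow (by positivity)
    have h1 := hcont.comp hutend
    rw [h0] at h1
    refine h1.congr fun n => ?_
    exact (Real.rpow_mul (hu0 n).le β α)
  · -- sandwich
    intro n
    have hδpos : 0 < u n ^ β := Real.rpow_pos_of_pos (hu0 n) _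
    have hδαpos : 0 < (u n ^ β) ^ α := Real.rpow_pos_of_pos hδpos _
    have hx0 : 0 ≤ c n / (u n ^ β) ^ α := div_nonneg (hc n).le hδαpos.le
    constructor
    · have := Nat.le_ceil (c n / (u n ^ β) ^ α)
      calc c n = c n / (u n ^ β) ^ α * (u n ^ β) ^ α := by field_simp
        _ ≤ (⌈c n / (u n ^ β) ^ α⌉₊ : ℝ) * (u n ^ β) ^ α :=
            mul_le_mul_of_nonneg_right this hδαpos.le
    · have hceil : (⌈c n / (u n ^ β) ^ α⌉₊ : ℝ) < c n / (u n ^ β) ^ α + 1 :=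
        Nat.ceil_lt_add_one hx0
      calc (⌈c n / (u n ^ β) ^ α⌉₊ : ℝ) * (u n ^ β) ^ α
          ≤ (c n / (u n ^ β) ^ α + 1) * (u n ^ β) ^ α :=
            mul_le_mul_of_nonneg_right hceil.le hδαpos.le
        _ = c n + (u n ^ β) ^ α := by field_simp
  · -- ENNReal identity
    intro n
    have hδ0' : (0:ℝ) ≤ u n ^ β := (Real.rpow_pos_of_pos (hu0 n) _).le
    rw [ENNReal.ofReal_rpow_of_nonneg hδ0' hα0.le,
      ENNReal.ofReal_mul (Nat.cast_nonneg _), ENNReal.ofReal_natCast]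

lemma shannon_params_gen (c : ℕ → ℝ) (hc : ∀ n, 0 < c n) :
    ∃ N : ℕ → ℕ, ∃ δ : ℕ → ℝ, (∀ n, 0 ≤ δ n) ∧ (∀ n, δ n ≤ 1) ∧
      Tendsto (fun n => (N n : ℝ) * δ n) atTop (𝓝 0) ∧
      Tendsto (fun n => Real.negMulLog (δ n)) atTop (𝓝 0) ∧
      (∀ n, c n ≤ (N n : ℝ) * Real.negMulLog (δ n) ∧
        (N n : ℝ) * Real.negMulLog (δ n) ≤ c n + Real.negMulLog (δ n)) ∧
      (∀ n, (N n : ℝ≥0∞) * ENNReal.ofReal (Real.negMulLog (δ n)) =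
        ENNReal.ofReal ((N n : ℝ) * Real.negMulLog (δ n))) := by
  set m : ℕ → ℝ := fun n => ((n : ℝ) + 1) * (c n + 1) with hm
  have hm1 : ∀ n, 1 ≤ m n := by
    intro n
    show (1:ℝ) ≤ ((n : ℝ) + 1) * (c n + 1)
    nlinarith [(Nat.cast_nonneg n : (0:ℝ) ≤ n), hc n]
  have hm0 : ∀ n, 0 < m n := fun n => lt_of_lt_of_le one_pos (hm1 n)
  have hmtop : Tendsto m atTop atTop := by
    refine tendsto_atTop_mono (fun n => ?_) (tendsto_natCast_atTop_atTop.atTop_add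
      tendsto_const_nhds (C := 1))
    show (n:ℝ) + 1 ≤ ((n : ℝ) + 1) * (c n + 1)
    nlinarith [(Nat.cast_nonneg n : (0:ℝ) ≤ n), hc n]
  have hf : ∀ n, Real.negMulLog (Real.exp (-(m n))) = m n * Real.exp (-(m n)) := by
    intro n
    rw [Real.negMulLog, Real.log_exp]
    ring
  have hfpos : ∀ n, 0 < Real.negMulLog (Real.exp (-(m n))) := by
    intro n
    rw [hf n]
    exact mul_pos (hm0 n) (Real.exp_pos _)
  have hftend : Tendsto (fun n => Real.negMulLog (Real.exp (-(m n)))) atTop (𝓝 0) := by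
    have h1 : Tendsto (fun x : ℝ => x ^ (1:ℕ) * Real.exp (-x)) atTop (𝓝 0) :=
      Real.tendsto_pow_mul_exp_neg_atTop_nhds_zero 1
    have h2 := h1.comp hmtop
    refine h2.congr fun n => ?_
    simp [hf n]
  have hδtend : Tendsto (fun n => Real.exp (-(m n))) atTop (𝓝 0) :=
    Real.tendsto_exp_neg_atTop_nhds_zero.comp hmtop
  have hδ1 : ∀ n, Real.exp (-(m n)) ≤ 1 := by
    intro n
    rw [← Real.exp_zero]
    exact Real.exp_le_exp.2 (by linarith [hm0 n])
  refine ⟨fun n => ⌈c n / Real.negMulLog (Real.exp (-(m n)))⌉₊,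
    fun n => Real.exp (-(m n)), fun n => (Real.exp_pos _).le, hδ1, ?_, hftend, ?_, ?_⟩
  · -- ε → 0
    have hsand : ∀ n : ℕ, (⌈c n / Real.negMulLog (Real.exp (-(m n)))⌉₊ : ℝ) *
        Real.exp (-(m n)) ≤ 1/((n:ℝ)+1) + Real.exp (-(m n)) := by
      intro n
      have hx0 : 0 ≤ c n / Real.negMulLog (Real.exp (-(m n))) :=
        div_nonneg (hc n).le (hfpos n).le
      have hceil := Nat.ceil_lt_add_one hx0
      calc (⌈c n / Real.negMulLog (Real.exp (-(m n)))⌉₊ : ℝ) * Real.exp (-(m n))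
          ≤ (c n / Real.negMulLog (Real.exp (-(m n))) + 1) * Real.exp (-(m n)) :=
            mul_le_mul_of_nonneg_right hceil.le (Real.exp_pos _).le
        _ = c n * (Real.exp (-(m n)) / Real.negMulLog (Real.exp (-(m n)))) +
            Real.exp (-(m n)) := by ring
        _ = c n * (m n)⁻¹ + Real.exp (-(m n)) := by
            rw [hf n]
            congr 2
            rw [div_eq_iff (ne_of_gt (mul_pos (hm0 n) (Real.exp_pos _)))]
            rw [inv_mul_eq_div, eq_div_iff (ne_of_gt (hm0 n))]
            ring
        _ ≤ 1/((n:ℝ)+1) + Real.exp (-(m n)) := by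
            gcongr
            calc c n * (m n)⁻¹ = (c n * (c n + 1)⁻¹) * ((n:ℝ)+1)⁻¹ := by
                  rw [hm]; rw [mul_inv]; ring
              _ ≤ 1 * ((n:ℝ)+1)⁻¹ :=
                  mul_le_mul_of_nonneg_right
                    (mul_inv_le_one_of_le₀ (by linarith [hc n]) (by linarith [hc n]))
                    (by positivity)
              _ = 1/((n:ℝ)+1) := by rw [one_mul, one_div]
    have hub : Tendsto (fun n : ℕ => 1/((n:ℝ)+1) + Real.exp (-(m n))) atTop (𝓝 0) := by
      simpa using tendsto_one_div_add_atTop_nhds_zero_nat.add hδtend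
    refine squeeze_zero (fun n => mul_nonneg (Nat.cast_nonneg _) (Real.exp_pos _).le)
      hsand hub
  · -- sandwich
    intro n
    have hx0 : 0 ≤ c n / Real.negMulLog (Real.exp (-(m n))) :=
      div_nonneg (hc n).le (hfpos n).le
    constructor
    · have h1 := Nat.le_ceil (c n / Real.negMulLog (Real.exp (-(m n))))
      calc c n = c n / Real.negMulLog (Real.exp (-(m n))) *
            Real.negMulLog (Real.exp (-(m n))) :=
            (div_mul_cancel₀ (c n) (ne_of_gt (hfpos n))).symm
        _ ≤ (⌈c n / Real.negMulLog (Real.exp (-(m n)))⌉₊ : ℝ) *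
            Real.negMulLog (Real.exp (-(m n))) :=
            mul_le_mul_of_nonneg_right h1 (hfpos n).le
    · have hceil := Nat.ceil_lt_add_one hx0
      calc (⌈c n / Real.negMulLog (Real.exp (-(m n)))⌉₊ : ℝ) *
            Real.negMulLog (Real.exp (-(m n)))
          ≤ (c n / Real.negMulLog (Real.exp (-(m n))) + 1) *
            Real.negMulLog (Real.exp (-(m n))) :=
            mul_le_mul_of_nonneg_right hceil.le (hfpos n).le
        _ = c n + Real.negMulLog (Real.exp (-(m n))) := by
            rw [add_mul, one_mul, div_mul_cancel₀ _ (ne_of_gt (hfpos n))]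
  · intro n
    rw [ENNReal.ofReal_mul (Nat.cast_nonneg _), ENNReal.ofReal_natCast]

-- helper: from real sandwich to ENNReal limit
lemma tendsto_ofReal_of_sandwich {f g : ℕ → ℝ} {c : ℝ}
    (hlo : ∀ n, c ≤ f n) (hhi : ∀ n, f n ≤ c + g n)
    (hg : Tendsto g atTop (𝓝 0)) :
    Tendsto (fun n => ENNReal.ofReal (f n)) atTop (𝓝 (ENNReal.ofReal c)) := by
  refine ENNReal.tendsto_ofReal ?_
  have h2 : Tendsto (fun n : ℕ => c + g n) atTop (𝓝 c) := by
    simpa using (tendsto_const_nhds (x := c)).add hg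
  exact tendsto_of_tendsto_of_tendsto_of_le_of_le tendsto_const_nhds h2 hlo hhi

lemma tendsto_top_of_lb {f : ℕ → ℝ≥0∞}
    (h : ∀ n : ℕ, ENNReal.ofReal ((n:ℝ) + 1) ≤ f n) : Tendsto f atTop (𝓝 ⊤) := by
  refine tendsto_nhds_top_mono ?_ (Eventually.of_forall h)
  exact ENNReal.tendsto_ofReal_atTop.comp
    (tendsto_natCast_atTop_atTop.atTop_add tendsto_const_nhds)

/-- For `α ∈ (0,1]`, any distribution `P`, and any `r ∈ [0,∞]`,
there is a sequence of distributions `Pₙ` with `d_TV(Pₙ,P) → 0` such that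
`lim H_α(Pₙ) = H_α(P) + r` (arithmetic in `[0,∞]`). -/
theorem stmt14 (α : ℝ) (hα0 : 0 < α) (hα1 : α ≤ 1)
    (p : ℕ → ℝ) (hp : IsProbDist p) (r : ℝ≥0∞) :
    ∃ P : ℕ → ℕ → ℝ, (∀ n, IsProbDist (P n)) ∧
      Tendsto (fun n => dTV (P n) p) atTop (𝓝 0) ∧
      Tendsto (fun n => renyiEntropy (P n) α) atTop
        (𝓝 (renyiEntropy p α + r)) := by
  classical
  have hdTVself : Tendsto (fun _ : ℕ => dTV p p) atTop (𝓝 0) := by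
    have : dTV p p = 0 := by unfold dTV; simp
    rw [this]
    exact tendsto_const_nhds
  by_cases hH : renyiEntropy p α = ⊤
  · refine ⟨fun _ => p, fun _ => hp, hdTVself, ?_⟩
    have h2 : renyiEntropy p α + r = renyiEntropy p α := by rw [hH]; exact top_add r
    rw [h2]
    exact tendsto_const_nhds
  by_cases hr0 : r = 0
  · refine ⟨fun _ => p, fun _ => hp, hdTVself, ?_⟩
    have h2 : renyiEntropy p α + r = renyiEntropy p α := by rw [hr0, add_zero]
    rw [h2]
    exact tendsto_const_nhds
  by_cases hα : α = 1
  · -- Shannon case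
    subst hα
    have hHs : shannonEntropy p ≠ ⊤ := by
      unfold renyiEntropy at hH
      rwa [if_pos rfl] at hH
    have hren : ∀ q : ℕ → ℝ, renyiEntropy q 1 = shannonEntropy q := fun q => if_pos rfl
    by_cases hrt : r = ⊤
    · obtain ⟨N, δ, hδ0, hδ1, hε, hft, hsand, hid⟩ :=
        shannon_params_gen (fun n => (n:ℝ) + 1) (fun n => by positivity)
      have hCtend : Tendsto (fun n => (N n : ℝ≥0∞) *
          ENNReal.ofReal (Real.negMulLog (δ n))) atTop (𝓝 ⊤) := by
        refine tendsto_top_of_lb fun n => ?_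
        rw [hid n]
        exact ENNReal.ofReal_le_ofReal (hsand n).1
      have hsh := tendsto_shannon_mixSeq hp hHs hδ0 hδ1 hε ⊤ hCtend
      refine ⟨mixSeq p N δ, mixSeq_isProbDist hp hδ0, tendsto_dTV_mixSeq hp hδ0 hε, ?_⟩
      simp only [hren, hrt, add_top]
      rwa [add_top] at hsh
    · have hrp : 0 < r.toReal := ENNReal.toReal_pos hr0 hrt
      obtain ⟨N, δ, hδ0, hδ1, hε, hft, hsand, hid⟩ :=
        shannon_params_gen (fun _ => r.toReal) (fun _ => hrp)
      have hCtend : Tendsto (fun n => (N n : ℝ≥0∞) *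
          ENNReal.ofReal (Real.negMulLog (δ n))) atTop (𝓝 r) := by
        have h1 := tendsto_ofReal_of_sandwich (c := r.toReal)
          (fun n => (hsand n).1) (fun n => (hsand n).2) hft
        rw [ENNReal.ofReal_toReal hrt] at h1
        refine h1.congr fun n => (hid n).symm
      have hsh := tendsto_shannon_mixSeq hp hHs hδ0 hδ1 hε r hCtend
      refine ⟨mixSeq p N δ, mixSeq_isProbDist hp hδ0, tendsto_dTV_mixSeq hp hδ0 hε, ?_⟩
      simpa only [hren] using hsh
  · -- Renyi case, α < 1
    have hα1' : α < 1 := lt_of_le_of_ne hα1 hα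
    have hS : renyiSum p α ≠ ⊤ := by
      intro h
      apply hH
      unfold renyiEntropy
      rw [if_neg hα, if_pos h]
    have hS1 : 1 ≤ renyiSum p α := renyiSum_ge_one hp hα0 hα1
    have hSt1 : (1:ℝ) ≤ (renyiSum p α).toReal := by
      rw [← ENNReal.toReal_one]
      exact ENNReal.toReal_mono hS hS1
    have hren : renyiEntropy p α =
        ENNReal.ofReal ((1 - α)⁻¹ * Real.log (renyiSum p α).toReal) := by
      unfold renyiEntropy
      rw [if_neg hα, if_neg hS]
    by_cases hrt : r = ⊤
    · obtain ⟨N, δ, hδ0, hδ1, hε, hft, hsand, hid⟩ :=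
        renyi_params_gen hα0 hα1' (fun n => (n:ℝ) + 1) (fun n => by positivity)
      have hCtend : Tendsto (fun n => (N n : ℝ≥0∞) * ENNReal.ofReal (δ n) ^ α)
          atTop (𝓝 ⊤) := by
        refine tendsto_top_of_lb fun n => ?_
        rw [hid n]
        exact ENNReal.ofReal_le_ofReal (hsand n).1
      obtain ⟨hRS, hfin⟩ := tendsto_renyiSum_mixSeq hα0 hα1 hp hS hδ0 hε ⊤ hCtend
      rw [add_top] at hRS
      have hent := tendsto_renyiEntropy_of_renyiSum hα1' (mixSeq p N δ) ⊤ le_top hfin hRS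
      rw [if_pos rfl] at hent
      refine ⟨mixSeq p N δ, mixSeq_isProbDist hp hδ0, tendsto_dTV_mixSeq hp hδ0 hε, ?_⟩
      rwa [hrt, add_top]
    · have hrp : 0 < r.toReal := ENNReal.toReal_pos hr0 hrt
      set E : ℝ := Real.exp ((1 - α) * r.toReal) with hE
      have hE1 : 1 < E := by
        have h0 : 0 < (1 - α) * r.toReal := mul_pos (by linarith) hrp
        calc (1:ℝ) = Real.exp 0 := Real.exp_zero.symm
          _ < E := Real.exp_lt_exp.2 h0
      set c₀ : ℝ := (renyiSum p α).toReal * (E - 1) with hc₀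
      have hc₀pos : 0 < c₀ := by
        rw [hc₀]
        have : (0:ℝ) < (renyiSum p α).toReal := by linarith
        nlinarith
      obtain ⟨N, δ, hδ0, hδ1, hε, hft, hsand, hid⟩ :=
        renyi_params_gen hα0 hα1' (fun _ => c₀) (fun _ => hc₀pos)
      have hCtend : Tendsto (fun n => (N n : ℝ≥0∞) * ENNReal.ofReal (δ n) ^ α)
          atTop (𝓝 (ENNReal.ofReal c₀)) := by
        have h1 := tendsto_ofReal_of_sandwich (c := c₀)
          (fun n => (hsand n).1) (fun n => (hsand n).2) hft
        refine h1.congr fun n => (hid n).symm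
      obtain ⟨hRS, hfin⟩ := tendsto_renyiSum_mixSeq hα0 hα1 hp hS hδ0 hε _ hCtend
      have hLne : renyiSum p α + ENNReal.ofReal c₀ ≠ ⊤ :=
        ENNReal.add_ne_top.2 ⟨hS, ENNReal.ofReal_ne_top⟩
      have hL1 : 1 ≤ renyiSum p α + ENNReal.ofReal c₀ := le_trans hS1 le_self_add
      have hent := tendsto_renyiEntropy_of_renyiSum hα1' (mixSeq p N δ) _ hL1 hfin hRS
      rw [if_neg hLne] at hent
      refine ⟨mixSeq p N δ, mixSeq_isProbDist hp hδ0, tendsto_dTV_mixSeq hp hδ0 hε, ?_⟩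
      have hLtoReal : (renyiSum p α + ENNReal.ofReal c₀).toReal =
          (renyiSum p α).toReal * E := by
        rw [ENNReal.toReal_add hS ENNReal.ofReal_ne_top, ENNReal.toReal_ofReal hc₀pos.le,
          hc₀]
        ring
      have hkey : ENNReal.ofReal ((1 - α)⁻¹ *
          Real.log (renyiSum p α + ENNReal.ofReal c₀).toReal) =
          renyiEntropy p α + r := by
        rw [hLtoReal, Real.log_mul (by linarith) (by rw [hE]; positivity), hE,
          Real.log_exp]
        have hexpand : (1 - α)⁻¹ * (Real.log (renyiSum p α).toReal +
            (1 - α) * r.toReal) = (1 - α)⁻¹ * Real.log (renyiSum p α).toReal +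
            r.toReal := by
          have h1a : (1:ℝ) - α ≠ 0 := by linarith
          field_simp
        rw [hexpand, ENNReal.ofReal_add
          (mul_nonneg (by simp only [inv_nonneg]; linarith) (Real.log_nonneg hSt1))
          hrp.le, ENNReal.ofReal_toReal hrt, hren]
      rwa [hkey] at hent
end

section
/- For every α ≥ 0, the Rényi entropy H_α is lower semicontinuous on the set of probability distributions over the positive integers with respect to the total variation distance: if d_TV(P_n, P) → 0, then liminf_{n→∞} H_α(P_n) ≥ H_α(P). -/
open Filter Topology
open scoped ENNReal

/-! ### Auxiliary lemmas -/

/-- Fatou's lemma for `tsum` over `ℕ`. -/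
lemma aux_fatou_tsum (f : ℕ → ℕ → ℝ≥0∞) :
    ∑' k, liminf (fun n => f n k) atTop ≤ liminf (fun n => ∑' k, f n k) atTop := by
  simpa [MeasureTheory.lintegral_count] using
    MeasureTheory.lintegral_liminf_le (μ := MeasureTheory.Measure.count (α := ℕ))
      (f := f) (fun n => measurable_of_countable _)

lemma aux_le_one {q : ℕ → ℝ} (hq : IsProbDist q) (k : ℕ) : q k ≤ 1 :=
  le_hasSum hq.2 k (fun j _ => hq.1 j)

/-- TV convergence implies pointwise convergence. -/
lemma aux_ptwise {P : ℕ → ℕ → ℝ} {p : ℕ → ℝ}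
    (hP : ∀ n, IsProbDist (P n)) (hp : IsProbDist p)
    (hconv : Tendsto (fun n => dTV (P n) p) atTop (𝓝 0)) (k : ℕ) :
    Tendsto (fun n => P n k) atTop (𝓝 (p k)) := by
  rw [tendsto_iff_dist_tendsto_zero]
  refine squeeze_zero (fun n => dist_nonneg) (fun n => ?_) hconv
  have hsum : Summable (fun j => |P n j - p j|) :=
    (((hP n).2.summable).sub hp.2.summable).abs
  simpa [Real.dist_eq, dTV] using Summable.le_tsum hsum k (fun j _ => abs_nonneg _)

/-- Lower semicontinuity of each term of the Rényi sum. -/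
lemma aux_term_liminf (α : ℝ) (hα : 0 ≤ α) {P : ℕ → ℕ → ℝ} {p : ℕ → ℝ} (k : ℕ)
    (hpk : 0 ≤ p k) (hk : Tendsto (fun n => P n k) atTop (𝓝 (p k))) :
    (if p k = 0 then 0 else ENNReal.ofReal (p k ^ α)) ≤
      liminf (fun n => if P n k = 0 then 0 else ENNReal.ofReal (P n k ^ α)) atTop := by
  by_cases h0 : p k = 0
  · simp [h0]
  · have hpos : 0 < p k := lt_of_le_of_ne hpk (Ne.symm h0)
    have hev : ∀ᶠ n in atTop, P n k ∈ Set.Ioi (0 : ℝ) := hk (Ioi_mem_nhds hpos)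
    have heq : ∀ᶠ n in atTop,
        (if P n k = 0 then 0 else ENNReal.ofReal (P n k ^ α))
          = ENNReal.ofReal (P n k ^ α) := by
      filter_upwards [hev] with n hn
      simp [ne_of_gt (Set.mem_Ioi.mp hn)]
    rw [if_neg h0, liminf_congr heq]
    have hc : Tendsto (fun n => ENNReal.ofReal (P n k ^ α)) atTop
        (𝓝 (ENNReal.ofReal (p k ^ α))) :=
      (ENNReal.continuous_ofReal.continuousAt.comp
        (Real.continuousAt_rpow_const _ _ (Or.inr hα))).tendsto.comp hk
    exact hc.liminf_eq.ge

/-- Lower semicontinuity of the Rényi sum. -/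
lemma aux_renyiSum_le_liminf (α : ℝ) (hα : 0 ≤ α) {P : ℕ → ℕ → ℝ} {p : ℕ → ℝ}
    (hp : IsProbDist p)
    (hpt : ∀ k, Tendsto (fun n => P n k) atTop (𝓝 (p k))) :
    renyiSum p α ≤ liminf (fun n => renyiSum (P n) α) atTop := by
  refine le_trans (ENNReal.tsum_le_tsum fun k => ?_) (aux_fatou_tsum _)
  exact aux_term_liminf α hα k (hp.1 k) (hpt k)

lemma aux_rpow_le_self {x : ℝ} (hx0 : 0 ≤ x) (hx1 : x ≤ 1) {α : ℝ} (hα : 1 ≤ α) :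
    x ^ α ≤ x := by
  rcases eq_or_lt_of_le hx0 with h | h
  · simp [← h, Real.zero_rpow (by linarith : α ≠ (0:ℝ))]
  · calc x ^ α ≤ x ^ (1 : ℝ) := Real.rpow_le_rpow_of_exponent_ge h hx1 hα
      _ = x := Real.rpow_one x

/-- For `α > 1`, the Rényi sum plus the "complementary" sum equals `1`. -/
lemma aux_sum_ST {q : ℕ → ℝ} (hq : IsProbDist q) {α : ℝ} (hα : 1 < α) :
    renyiSum q α + (∑' k, ENNReal.ofReal (q k - q k ^ α)) = 1 := by
  have h1 : renyiSum q α = ∑' k, ENNReal.ofReal (q k ^ α) := by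
    unfold renyiSum
    congr 1
    funext k
    by_cases h : q k = 0 <;> simp [h, Real.zero_rpow (by linarith : α ≠ (0:ℝ))]
  rw [h1, ← ENNReal.tsum_add]
  have hterm : ∀ k, ENNReal.ofReal (q k ^ α) + ENNReal.ofReal (q k - q k ^ α)
      = ENNReal.ofReal (q k) := by
    intro k
    rw [← ENNReal.ofReal_add (Real.rpow_nonneg (hq.1 k) α)
      (sub_nonneg.mpr (aux_rpow_le_self (hq.1 k) (aux_le_one hq k) hα.le))]
    ring_nf
  calc (∑' k, (ENNReal.ofReal (q k ^ α) + ENNReal.ofReal (q k - q k ^ α)))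
      = ∑' k, ENNReal.ofReal (q k) := by exact tsum_congr hterm
    _ = ENNReal.ofReal (∑' k, q k) :=
        (ENNReal.ofReal_tsum_of_nonneg hq.1 hq.2.summable).symm
    _ = 1 := by rw [hq.2.tsum_eq, ENNReal.ofReal_one]

/-- Lower semicontinuity of the Shannon entropy. -/
lemma aux_shannon_le_liminf {P : ℕ → ℕ → ℝ} {p : ℕ → ℝ}
    (hpt : ∀ k, Tendsto (fun n => P n k) atTop (𝓝 (p k))) :
    shannonEntropy p ≤ liminf (fun n => shannonEntropy (P n)) atTop := by
  refine le_trans (ENNReal.tsum_le_tsum fun k => ?_) (aux_fatou_tsum _)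
  have hc : Tendsto (fun n => ENNReal.ofReal (-(P n k * Real.log (P n k)))) atTop
      (𝓝 (ENNReal.ofReal (-(p k * Real.log (p k))))) :=
    ((ENNReal.continuous_ofReal.comp Real.continuous_mul_log.neg).continuousAt).tendsto.comp
      (hpt k)
  exact hc.liminf_eq.ge

/-- For `α > 1`, the Rényi sum is continuous along TV-convergent sequences. -/
lemma aux_tendsto_renyiSum {P : ℕ → ℕ → ℝ} {p : ℕ → ℝ} {α : ℝ} (hα : 1 < α)
    (hP : ∀ n, IsProbDist (P n)) (hp : IsProbDist p)
    (hpt : ∀ k, Tendsto (fun k' => P k' k) atTop (𝓝 (p k))) :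
    Tendsto (fun n => renyiSum (P n) α) atTop (𝓝 (renyiSum p α)) := by
  set T : (ℕ → ℝ) → ℝ≥0∞ := fun q => ∑' k, ENNReal.ofReal (q k - q k ^ α) with hT
  have hST : ∀ n, renyiSum (P n) α + T (P n) = 1 := fun n => aux_sum_ST (hP n) hα
  have hSTp : renyiSum p α + T p = 1 := aux_sum_ST hp hα
  have hTle : ∀ q, IsProbDist q → T q ≤ 1 := by
    intro q hq
    rw [← aux_sum_ST hq hα]
    exact le_add_self
  have hTne : ∀ n, T (P n) ≠ ∞ := fun n => ((hTle _ (hP n)).trans_lt ENNReal.one_lt_top).ne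
  have hTpne : T p ≠ ∞ := ((hTle _ hp).trans_lt ENNReal.one_lt_top).ne
  have hSn_eq : ∀ n, renyiSum (P n) α = 1 - T (P n) :=
    fun n => ENNReal.eq_sub_of_add_eq (hTne n) (hST n)
  have hSp_eq : renyiSum p α = 1 - T p := ENNReal.eq_sub_of_add_eq hTpne hSTp
  -- Fatou for T
  have hTliminf : T p ≤ liminf (fun n => T (P n)) atTop := by
    refine le_trans (ENNReal.tsum_le_tsum fun k => ?_) (aux_fatou_tsum _)
    have hc : Tendsto (fun n => ENNReal.ofReal (P n k - P n k ^ α)) atTop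
        (𝓝 (ENNReal.ofReal (p k - p k ^ α))) := by
      have hcr : ContinuousAt (fun x : ℝ => x - x ^ α) (p k) :=
        continuousAt_id.sub (Real.continuousAt_rpow_const _ _ (Or.inr (by linarith)))
      exact (ENNReal.continuous_ofReal.continuousAt.comp hcr).tendsto.comp (hpt k)
    exact hc.liminf_eq.ge
  -- limsup of S
  have hanti : Antitone (fun x : ℝ≥0∞ => 1 - x) := fun a b h => tsub_le_tsub_left h 1
  have hmap := hanti.map_liminf_of_continuousAt (F := atTop) (fun n => T (P n))
    ((ENNReal.continuous_sub_left ENNReal.one_ne_top).continuousAt)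
  have hlimsup : limsup (fun n => renyiSum (P n) α) atTop ≤ renyiSum p α := by
    have heq : limsup (fun n => renyiSum (P n) α) atTop
        = 1 - liminf (fun n => T (P n)) atTop := by
      rw [hmap]
      exact limsup_congr (Eventually.of_forall fun n => hSn_eq n)
    rw [heq, hSp_eq]
    exact tsub_le_tsub_left hTliminf 1
  have hSliminf : renyiSum p α ≤ liminf (fun n => renyiSum (P n) α) atTop :=
    aux_renyiSum_le_liminf α (by linarith) hp hpt
  exact tendsto_of_le_liminf_of_limsup_le hSliminf hlimsup

lemma aux_renyiSum_pos {q : ℕ → ℝ} (hq : IsProbDist q) (α : ℝ) :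
    0 < renyiSum q α := by
  obtain ⟨k, hk⟩ : ∃ k, q k ≠ 0 := by
    by_contra h
    push_neg at h
    have : HasSum q 0 := by
      convert hasSum_zero with k
      exact h k
    simpa using hq.2.unique this
  have hkpos : 0 < q k := lt_of_le_of_ne (hq.1 k) (Ne.symm hk)
  calc (0 : ℝ≥0∞) < ENNReal.ofReal (q k ^ α) :=
        ENNReal.ofReal_pos.mpr (Real.rpow_pos_of_pos hkpos α)
    _ = (if q k = 0 then 0 else ENNReal.ofReal (q k ^ α)) := by rw [if_neg hk]
    _ ≤ renyiSum q α := ENNReal.le_tsum k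

/-- For every `α ≥ 0`, the Rényi entropy `H_α` is lower
semicontinuous with respect to the total variation distance:
if `d_TV(Pₙ,P) → 0` then `liminf H_α(Pₙ) ≥ H_α(P)`. -/
theorem stmt15 (α : ℝ) (hα : 0 ≤ α) (P : ℕ → ℕ → ℝ) (p : ℕ → ℝ)
    (hP : ∀ n, IsProbDist (P n)) (hp : IsProbDist p)
    (hconv : Tendsto (fun n => dTV (P n) p) atTop (𝓝 0)) :
    renyiEntropy p α ≤ Filter.liminf (fun n => renyiEntropy (P n) α) atTop := by
  have hpt : ∀ k, Tendsto (fun n => P n k) atTop (𝓝 (p k)) := aux_ptwise hP hp hconv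
  by_cases hα1 : α = 1
  · -- Shannon case
    subst hα1
    simpa [renyiEntropy] using aux_shannon_le_liminf hpt
  by_cases hgt : 1 < α
  · -- α > 1 : everything is continuous
    have hS := aux_tendsto_renyiSum hgt hP hp hpt
    have hSne : ∀ q, IsProbDist q → renyiSum q α ≠ ∞ := by
      intro q hq
      have : renyiSum q α ≤ 1 := by
        rw [← aux_sum_ST hq hgt]; exact self_le_add_right _ _
      exact (this.trans_lt ENNReal.one_lt_top).ne
    have hSpne : renyiSum p α ≠ ∞ := hSne p hp
    have hSp0 : (renyiSum p α).toReal ≠ 0 :=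
      ENNReal.toReal_ne_zero.mpr ⟨(aux_renyiSum_pos hp α).ne', hSpne⟩
    have h1 : Tendsto (fun n => (renyiSum (P n) α).toReal) atTop
        (𝓝 (renyiSum p α).toReal) := (ENNReal.tendsto_toReal hSpne).comp hS
    have h2 : Tendsto (fun n => ENNReal.ofReal ((1 - α)⁻¹ * Real.log (renyiSum (P n) α).toReal))
        atTop (𝓝 (ENNReal.ofReal ((1 - α)⁻¹ * Real.log (renyiSum p α).toReal))) := by
      refine ENNReal.continuous_ofReal.continuousAt.tendsto.comp ?_
      exact (((Real.continuousAt_log hSp0).tendsto.comp h1).const_mul _)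
    have hEeq : ∀ n, renyiEntropy (P n) α
        = ENNReal.ofReal ((1 - α)⁻¹ * Real.log (renyiSum (P n) α).toReal) := by
      intro n
      simp [renyiEntropy, hα1, hSne _ (hP n)]
    have hEp : renyiEntropy p α
        = ENNReal.ofReal ((1 - α)⁻¹ * Real.log (renyiSum p α).toReal) := by
      simp [renyiEntropy, hα1, hSpne]
    rw [hEp]
    have : Tendsto (fun n => renyiEntropy (P n) α) atTop
        (𝓝 (ENNReal.ofReal ((1 - α)⁻¹ * Real.log (renyiSum p α).toReal))) := by
      simpa only [← hEeq] using h2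
    exact this.liminf_eq.ge
  · -- α < 1
    have hlt : α < 1 := lt_of_le_of_ne (not_lt.mp hgt) hα1
    have hc : 0 < (1 - α)⁻¹ := inv_pos.mpr (by linarith)
    set c := (1 - α)⁻¹ with hcdef
    have hSliminf : renyiSum p α ≤ liminf (fun n => renyiSum (P n) α) atTop :=
      aux_renyiSum_le_liminf α hα hp hpt
    set L := liminf (fun n => renyiEntropy (P n) α) atTop with hLdef
    -- a generic "eventually big" lemma
    have key : ∀ r : ℝ, ENNReal.ofReal (Real.exp (r / c)) < liminf (fun n => renyiSum (P n) α) atTop →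
        ENNReal.ofReal r ≤ L := by
      intro r hr
      have hev := eventually_lt_of_lt_liminf hr
      have hevH : ∀ᶠ n in atTop, ENNReal.ofReal r ≤ renyiEntropy (P n) α := by
        filter_upwards [hev] with n hn
        by_cases hn_top : renyiSum (P n) α = ∞
        · simp [renyiEntropy, hα1, hn_top]
        · have h1 : Real.exp (r / c) < (renyiSum (P n) α).toReal :=
            (ENNReal.ofReal_lt_iff_lt_toReal (Real.exp_pos _).le hn_top).mp hn
          have h2 : r / c < Real.log (renyiSum (P n) α).toReal :=
            (Real.lt_log_iff_exp_lt (lt_trans (Real.exp_pos _) h1)).mpr h1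
          have h3 : r ≤ c * Real.log (renyiSum (P n) α).toReal := by
            rw [div_lt_iff₀ hc] at h2
            nlinarith
          have : renyiEntropy (P n) α
              = ENNReal.ofReal (c * Real.log (renyiSum (P n) α).toReal) := by
            simp [renyiEntropy, hα1, hn_top, hcdef]
          rw [this]
          exact ENNReal.ofReal_le_ofReal h3
      calc ENNReal.ofReal r = liminf (fun _ : ℕ => ENNReal.ofReal r) atTop :=
            (liminf_const _).symm
        _ ≤ L := liminf_le_liminf hevH
    by_cases hStop : renyiSum p α = ∞
    · -- infinite Rényi sum: entropy is ∞ and liminf is ∞ too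
      have htop : liminf (fun n => renyiSum (P n) α) atTop = ∞ :=
        top_le_iff.mp (hStop ▸ hSliminf)
      have hLtop : L = ∞ := by
        by_contra hL
        have h1 := key (L.toReal + 1) (by rw [htop]; exact ENNReal.ofReal_lt_top)
        have h2 : L < ENNReal.ofReal (L.toReal + 1) :=
          (ENNReal.lt_ofReal_iff_toReal_lt hL).mpr (lt_add_one _)
        exact absurd h1 (not_le.mpr h2)
      rw [hLtop]
      exact le_top
    · -- finite Rényi sum
      have hEp : renyiEntropy p α
          = ENNReal.ofReal (c * Real.log (renyiSum p α).toReal) := by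
        simp [renyiEntropy, hα1, hStop, hcdef]
      rw [hEp]
      set s := (renyiSum p α).toReal with hsdef
      by_cases hval : c * Real.log s ≤ 0
      · rw [ENNReal.ofReal_eq_zero.mpr hval]
        exact zero_le
      push_neg at hval
      have hlogs : 0 < Real.log s := by
        rcases (mul_pos_iff.mp hval) with ⟨_, h⟩ | ⟨h, _⟩
        · exact h
        · exact absurd hc (not_lt.mpr h.le)
      have hs1 : 1 < s := by
        by_contra hs
        push_neg at hs
        exact absurd (Real.log_nonpos (ENNReal.toReal_nonneg) hs) (not_le.mpr hlogs)
      by_contra hcon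
      push_neg at hcon
      have hLne : L ≠ ∞ := hcon.ne_top
      set t := L.toReal with htdef
      have ht : t < c * Real.log s := (ENNReal.lt_ofReal_iff_toReal_lt hLne).mp hcon
      have ht0 : 0 ≤ t := ENNReal.toReal_nonneg
      set r := (t + c * Real.log s) / 2 with hrdef
      have hr1 : t < r := by rw [hrdef]; linarith
      have hr2 : r < c * Real.log s := by rw [hrdef]; linarith
      have hrc : r / c < Real.log s := (div_lt_iff₀ hc).mpr (by nlinarith)
      have hs' : Real.exp (r / c) < s := by
        calc Real.exp (r / c) < Real.exp (Real.log s) := Real.exp_lt_exp.mpr hrc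
          _ = s := Real.exp_log (by linarith)
      have hofs' : ENNReal.ofReal (Real.exp (r / c)) < renyiSum p α :=
        (ENNReal.ofReal_lt_iff_lt_toReal (Real.exp_pos _).le hStop).mpr hs'
      have hkey := key r (lt_of_lt_of_le hofs' hSliminf)
      have : L < ENNReal.ofReal r := by
        calc L = ENNReal.ofReal t := (ENNReal.ofReal_toReal hLne).symm
          _ < ENNReal.ofReal r := (ENNReal.ofReal_lt_ofReal_iff (by linarith)).mpr hr1
      exact absurd hkey (not_le.mpr this)
end

section
/- Let P be a probability distribution over the positive integers. Then lim_{α→1+} H_α(P) = H_1(P), where both sides may be infinite (i.e. if the Shannon entropy H_1(P) = ∞ then H_α(P) → ∞ as α → 1+). Moreover, if α_c(P) < 1, then also lim_{α→1−} H_α(P) = H_1(P), so that lim_{α→1} H_α(P) = H_1(P). -/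
open Filter Topology
open scoped ENNReal

namespace Stmt16Aux

noncomputable def rr (p : ℕ → ℝ) (α : ℝ) (n : ℕ) : ℝ :=
  if p n = 0 then 0 else p n ^ α

variable {p : ℕ → ℝ}

lemma rr_nonneg (hp : ∀ n, 0 ≤ p n) (α : ℝ) (n : ℕ) : 0 ≤ rr p α n := by
  unfold rr; split
  · exact le_rfl
  · exact Real.rpow_nonneg (hp n) α

lemma rr_one (n : ℕ) : rr p 1 n = p n := by
  unfold rr; split
  · next h => exact h.symm
  · exact Real.rpow_one _

lemma rr_anti (hp : ∀ n, 0 ≤ p n) (hp1 : ∀ n, p n ≤ 1) {α β : ℝ} (h : β ≤ α) (n : ℕ) :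
    rr p α n ≤ rr p β n := by
  unfold rr; split
  · exact le_rfl
  · next hn =>
      exact Real.rpow_le_rpow_of_exponent_ge (lt_of_le_of_ne (hp n) (Ne.symm hn)) (hp1 n) h

lemma renyiSum_eq (p : ℕ → ℝ) (α : ℝ) :
    renyiSum p α = ∑' n, ENNReal.ofReal (rr p α n) := by
  unfold renyiSum rr
  refine tsum_congr fun n => ?_
  split
  · simp
  · rfl

lemma renyiSum_ofReal (hp : ∀ n, 0 ≤ p n) {α : ℝ} (hs : Summable (rr p α)) :
    renyiSum p α = ENNReal.ofReal (∑' n, rr p α n) := by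
  rw [renyiSum_eq, ENNReal.ofReal_tsum_of_nonneg (rr_nonneg hp α) hs]

lemma renyiEntropy_eq (hp : ∀ n, 0 ≤ p n) {α : ℝ} (hα : α ≠ 1) (hs : Summable (rr p α)) :
    renyiEntropy p α = ENNReal.ofReal ((1 - α)⁻¹ * Real.log (∑' n, rr p α n)) := by
  rw [renyiEntropy, if_neg hα, renyiSum_ofReal hp hs, if_neg ENNReal.ofReal_ne_top,
    ENNReal.toReal_ofReal (tsum_nonneg (rr_nonneg hp α))]

lemma le_one (hp : IsProbDist p) (n : ℕ) : p n ≤ 1 :=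
  le_hasSum hp.2 n fun m _ => hp.1 m

lemma exists_pos (hp : IsProbDist p) : ∃ m, 0 < p m := by
  by_contra h
  push_neg at h
  have hz : p = fun _ => 0 := funext fun n => le_antisymm (h n) (hp.1 n)
  rw [hz] at hp
  exact one_ne_zero (hp.2.unique hasSum_zero)

lemma summable_rr_one (hp : IsProbDist p) : Summable (rr p 1) := by
  have h : rr p 1 = p := funext rr_one
  rw [h]; exact hp.2.summable

lemma tsum_rr_one (hp : IsProbDist p) : ∑' n, rr p 1 n = 1 := by
  have h : rr p 1 = p := funext rr_one
  rw [h]; exact hp.2.tsum_eq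

lemma summable_rr (hp : IsProbDist p) {β α : ℝ} (hβα : β ≤ α) (hs : Summable (rr p β)) :
    Summable (rr p α) :=
  hs.of_nonneg_of_le (rr_nonneg hp.1 α) (rr_anti hp.1 (le_one hp) hβα)

lemma tsum_rr_pos (hp : IsProbDist p) {α : ℝ} (hs : Summable (rr p α)) :
    0 < ∑' n, rr p α n := by
  obtain ⟨m, hm⟩ := exists_pos hp
  calc (0:ℝ) < rr p α m := by
        unfold rr; rw [if_neg hm.ne']; exact Real.rpow_pos_of_pos hm α
    _ ≤ _ := Summable.le_tsum hs m fun b _ => rr_nonneg hp.1 α b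

lemma ent_nonneg (hp : IsProbDist p) (n : ℕ) : 0 ≤ -(p n * Real.log (p n)) :=
  neg_nonneg.2 (mul_nonpos_of_nonneg_of_nonpos (hp.1 n) (Real.log_nonpos (hp.1 n) (le_one hp n)))

lemma tendsto_slope (hp : ∀ n, 0 ≤ p n) (n : ℕ) :
    Tendsto (fun α : ℝ => (p n - rr p α n) / (α - 1)) (𝓝[≠] (1:ℝ))
      (𝓝 (-(p n * Real.log (p n)))) := by
  rcases eq_or_lt_of_le (hp n) with h0 | h0
  · have hfun : (fun α : ℝ => (p n - rr p α n) / (α - 1)) = fun _ => 0 := by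
      funext α; rw [rr, if_pos h0.symm, ← h0]; simp
    rw [hfun, ← h0]
    simpa using (tendsto_const_nhds : Tendsto (fun _ : ℝ => (0:ℝ)) (𝓝[≠] (1:ℝ)) (𝓝 0))
  · have hd := (Real.hasStrictDerivAt_const_rpow h0 1).hasDerivAt
    rw [hasDerivAt_iff_tendsto_slope] at hd
    have hneg := hd.neg
    rw [Real.rpow_one] at hneg
    refine hneg.congr fun α => ?_
    rw [slope_def_field, rr, if_neg h0.ne', Real.rpow_one, ← neg_div, neg_sub]

lemma exp_slope_mono {t s v : ℝ} (ht : 0 < t) (hts : t ≤ s) (hv : 0 ≤ v) :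
    Real.exp (t * v) - 1 ≤ t / s * (Real.exp (s * v) - 1) := by
  have hs : 0 < s := ht.trans_le hts
  have ha : (0:ℝ) ≤ t / s := le_of_lt (div_pos ht hs)
  have hb : (0:ℝ) ≤ 1 - t / s := by
    have : t / s ≤ 1 := (div_le_one hs).2 hts
    linarith
  have h := convexOn_exp.2 (Set.mem_univ (s * v)) (Set.mem_univ (0:ℝ)) ha hb (by ring)
  simp only [smul_eq_mul, mul_zero, add_zero, Real.exp_zero, mul_one] at h
  have hmul : t / s * (s * v) = t * v := by field_simp
  rw [hmul] at h
  have hexp : t / s * (Real.exp (s*v) - 1) = t / s * Real.exp (s*v) - t/s := by ring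
  linarith [h, hexp]

lemma rr_exp {n : ℕ} (h0 : 0 < p n) (γ : ℝ) :
    rr p γ n = p n * Real.exp ((1 - γ) * -Real.log (p n)) := by
  rw [rr, if_neg h0.ne', Real.rpow_def_of_pos h0]
  obtain ⟨L, hL⟩ : ∃ L, Real.exp L = p n := ⟨Real.log (p n), Real.exp_log h0⟩
  rw [← hL, Real.log_exp, ← Real.exp_add]
  congr 1
  ring

lemma key_left (hp : IsProbDist p) {α β : ℝ} (hα : α < 1) (hβα : β ≤ α) (n : ℕ) :
    rr p α n - p n ≤ (1 - α) / (1 - β) * (rr p β n - p n) := by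
  rcases eq_or_lt_of_le (hp.1 n) with h0 | h0
  · rw [rr, rr, if_pos h0.symm, if_pos h0.symm, ← h0]; simp
  · have hv : 0 ≤ -Real.log (p n) := neg_nonneg.2 (Real.log_nonpos (hp.1 n) (le_one hp n))
    have h := exp_slope_mono (t := 1 - α) (s := 1 - β) (by linarith) (by linarith) hv
    rw [rr_exp h0 α, rr_exp h0 β]
    have h2 := mul_le_mul_of_nonneg_left h h0.le
    nlinarith [h2]

lemma ent_bound (hp : IsProbDist p) {β : ℝ} (hβ : β < 1) (n : ℕ) :
    -(p n * Real.log (p n)) ≤ (rr p β n - p n) / (1 - β) := by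
  have hs : (0:ℝ) < 1 - β := by linarith
  rcases eq_or_lt_of_le (hp.1 n) with h0 | h0
  · rw [rr, if_pos h0.symm, ← h0]; simp
  · have h := Real.add_one_le_exp ((1 - β) * -Real.log (p n))
    rw [rr_exp h0 β, le_div_iff₀ hs]
    have h2 := mul_le_mul_of_nonneg_left h h0.le
    nlinarith [h2]

lemma right_bound (hp : IsProbDist p) {α : ℝ} (n : ℕ) :
    p n - rr p α n ≤ (α - 1) * -(p n * Real.log (p n)) := by
  rcases eq_or_lt_of_le (hp.1 n) with h0 | h0
  · rw [rr, if_pos h0.symm, ← h0]; simp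
  · have h := Real.add_one_le_exp ((α - 1) * Real.log (p n))
    rw [rr_exp h0 α]
    have heq : (1 - α) * -Real.log (p n) = (α - 1) * Real.log (p n) := by ring
    rw [heq]
    have h2 := mul_le_mul_of_nonneg_left h h0.le
    nlinarith [h2]


lemma lower_bound_right (hp : IsProbDist p) (F : Finset ℕ) {α : ℝ} (hα : 1 < α) :
    ENNReal.ofReal (∑ n ∈ F, (p n - rr p α n) / (α - 1)) ≤ renyiEntropy p α := by
  have hp0 := hp.1
  have hp1 := le_one hp
  have hsum : Summable (rr p α) := summable_rr hp hα.le (summable_rr_one hp)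
  set S := ∑' n, rr p α n with hSdef
  have hS0 : 0 < S := tsum_rr_pos hp hsum
  have ht : (0:ℝ) < α - 1 := by linarith
  have hne : α - 1 ≠ 0 := ht.ne'
  have h1α : (1:ℝ) - α ≠ 0 := by intro h; apply hne; linarith
  rw [renyiEntropy_eq hp0 (ne_of_gt hα) hsum]
  apply ENNReal.ofReal_le_ofReal
  rw [← Finset.sum_div]
  have hlog : Real.log S ≤ S - 1 := Real.log_le_sub_one_of_pos hS0
  have hterm : ∀ n, 0 ≤ p n - rr p α n := fun n =>
    sub_nonneg.2 (by simpa [rr_one] using rr_anti hp0 hp1 hα.le n)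
  have hsub : ∑ n ∈ F, (p n - rr p α n) ≤ 1 - S := by
    have hsum_sub : Summable (fun n => p n - rr p α n) := hp.2.summable.sub hsum
    have h1S : (1:ℝ) - S = ∑' n, (p n - rr p α n) := by
      rw [Summable.tsum_sub hp.2.summable hsum, hp.2.tsum_eq]
    rw [h1S]
    exact Summable.sum_le_tsum F (fun n _ => hterm n) hsum_sub
  have hneg : (1 - α)⁻¹ ≤ 0 := inv_nonpos.2 (by linarith)
  have h3 : (1-α)⁻¹ * (S - 1) ≤ (1-α)⁻¹ * Real.log S := mul_le_mul_of_nonpos_left hlog hneg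
  have h4 : (∑ n ∈ F, (p n - rr p α n)) / (α - 1) ≤ (1 - S) / (α - 1) := by gcongr
  have heq : (1 - S)/(α - 1) = (1-α)⁻¹ * (S - 1) := by field_simp; ring
  linarith [h3, h4]

lemma tendsto_right (hp : IsProbDist p) :
    Tendsto (fun α : ℝ => renyiEntropy p α) (𝓝[>] (1:ℝ)) (𝓝 (shannonEntropy p)) := by
  have hp0 := hp.1
  have hmono : 𝓝[>] (1:ℝ) ≤ 𝓝[≠] (1:ℝ) := nhdsWithin_mono _ fun x hx => hx.ne'
  refine tendsto_order.2 ⟨fun c hc => ?_, fun c hc => ?_⟩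
  · rw [shannonEntropy, ENNReal.tsum_eq_iSup_sum, lt_iSup_iff] at hc
    obtain ⟨F, hF⟩ := hc
    have hF' : c < ENNReal.ofReal (∑ n ∈ F, -(p n * Real.log (p n))) := by
      rwa [ENNReal.ofReal_sum_of_nonneg (fun n _ => ent_nonneg hp n)]
    have hgF : Tendsto (fun α : ℝ => ∑ n ∈ F, (p n - rr p α n) / (α - 1)) (𝓝[>] (1:ℝ))
        (𝓝 (∑ n ∈ F, -(p n * Real.log (p n)))) :=
      (tendsto_finset_sum F fun n _ => tendsto_slope hp0 n).mono_left hmono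
    have h1 : Tendsto (fun α : ℝ => ENNReal.ofReal (∑ n ∈ F, (p n - rr p α n) / (α - 1)))
        (𝓝[>] (1:ℝ)) (𝓝 (ENNReal.ofReal (∑ n ∈ F, -(p n * Real.log (p n))))) :=
      (ENNReal.continuous_ofReal.tendsto _).comp hgF
    filter_upwards [h1.eventually_const_lt hF', self_mem_nhdsWithin] with α h2 h3
    exact h2.trans_le (lower_bound_right hp F h3)
  · have hfin : shannonEntropy p ≠ ⊤ := hc.ne_top
    rw [shannonEntropy] at hfin
    have hsummH : Summable (fun n => -(p n * Real.log (p n))) := by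
      have h := ENNReal.summable_toReal hfin
      exact h.congr fun n => ENNReal.toReal_ofReal (ent_nonneg hp n)
    set H := ∑' n, -(p n * Real.log (p n)) with hHdef
    have hH0 : 0 ≤ H := tsum_nonneg fun n => ent_nonneg hp n
    have hsh : shannonEntropy p = ENNReal.ofReal H := by
      rw [shannonEntropy, ← ENNReal.ofReal_tsum_of_nonneg (fun n => ent_nonneg hp n) hsummH]
    have hu : Tendsto (fun α : ℝ => H / (1 - (α - 1) * H)) (𝓝[>] (1:ℝ)) (𝓝 H) := by
      have h2 : Tendsto (fun α : ℝ => 1 - (α - 1) * H) (𝓝 (1:ℝ)) (𝓝 1) := by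
        have h2' : Tendsto (fun α : ℝ => 1 - (α - 1) * H) (𝓝 (1:ℝ)) (𝓝 (1 - (1 - 1) * H)) :=
          tendsto_const_nhds.sub ((tendsto_id.sub_const 1).mul_const H)
        simpa using h2'
      have h3 : Tendsto (fun α : ℝ => H / (1 - (α - 1) * H)) (𝓝 (1:ℝ)) (𝓝 (H / 1)) :=
        tendsto_const_nhds.div h2 one_ne_zero
      simpa using h3.mono_left nhdsWithin_le_nhds
    have h1 : Tendsto (fun α : ℝ => ENNReal.ofReal (H / (1 - (α - 1) * H))) (𝓝[>] (1:ℝ))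
        (𝓝 (ENNReal.ofReal H)) := (ENNReal.continuous_ofReal.tendsto _).comp hu
    have hlt : ENNReal.ofReal H < c := hsh ▸ hc
    have hH1 : (0:ℝ) < H + 1 := by linarith
    have hmem : Set.Ioo (1:ℝ) (1 + (H + 1)⁻¹) ∈ 𝓝[>] (1:ℝ) :=
      Ioo_mem_nhdsGT_of_mem ⟨le_refl 1, by simp [inv_pos.2 hH1]⟩
    filter_upwards [h1.eventually_lt_const hlt, hmem] with α h2 h3
    refine lt_of_le_of_lt ?_ h2
    obtain ⟨hα1, hα2⟩ := h3
    have ht : (0:ℝ) < α - 1 := by linarith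
    have hαH : α - 1 < (H + 1)⁻¹ := by linarith
    have hinv : (H + 1)⁻¹ * (H + 1) = 1 := inv_mul_cancel₀ hH1.ne'
    have htH : (α - 1) * H < 1 := by nlinarith [mul_lt_mul_of_pos_right hαH hH1]
    have hden : (0:ℝ) < 1 - (α - 1) * H := by linarith
    have hsum : Summable (rr p α) := summable_rr hp hα1.le (summable_rr_one hp)
    have hS0 : 0 < ∑' n, rr p α n := tsum_rr_pos hp hsum
    set S := ∑' n, rr p α n with hSdef
    have h1S : 1 - S ≤ (α - 1) * H := by
      have hsum_sub : Summable (fun n => p n - rr p α n) := hp.2.summable.sub hsum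
      have heq : (1:ℝ) - S = ∑' n, (p n - rr p α n) := by
        rw [hSdef, Summable.tsum_sub hp.2.summable hsum, hp.2.tsum_eq]
      rw [heq, hHdef, ← tsum_mul_left]
      exact Summable.tsum_le_tsum (fun n => right_bound hp n) hsum_sub (hsummH.mul_left _)
    have hSd : 1 - (α - 1) * H ≤ S := by linarith
    rw [renyiEntropy_eq hp0 (ne_of_gt hα1) hsum]
    apply ENNReal.ofReal_le_ofReal
    have hlogS : -Real.log S ≤ (1 - S) / S := by
      have hx := Real.log_le_sub_one_of_pos (inv_pos.2 hS0)
      rw [Real.log_inv] at hx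
      have hy : (S:ℝ)⁻¹ - 1 = (1 - S) / S := by field_simp
      linarith
    have hfrac : (1 - S) / S ≤ ((α - 1) * H) / (1 - (α - 1) * H) :=
      div_le_div₀ (mul_nonneg ht.le hH0) h1S hden hSd
    have hval : (1 - α)⁻¹ * Real.log S = (α - 1)⁻¹ * (-Real.log S) := by
      rw [show (1:ℝ) - α = -(α - 1) by ring, inv_neg]; ring
    have hinvt : (0:ℝ) ≤ (α - 1)⁻¹ := inv_nonneg.2 ht.le
    calc (1 - α)⁻¹ * Real.log S = (α - 1)⁻¹ * (-Real.log S) := hval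
      _ ≤ (α - 1)⁻¹ * ((1 - S) / S) := mul_le_mul_of_nonneg_left hlogS hinvt
      _ ≤ (α - 1)⁻¹ * (((α - 1) * H) / (1 - (α - 1) * H)) := mul_le_mul_of_nonneg_left hfrac hinvt
      _ = H / (1 - (α - 1) * H) := by
          field_simp


section Left

variable {β : ℝ}

lemma term_flip {x y α : ℝ} : (x - y) / (α - 1) = (y - x) / (1 - α) := by
  rw [show x - y = -(y - x) by ring, show α - 1 = -(1 - α) by ring, neg_div_neg_eq]

lemma left_summable (hp : IsProbDist p) (hsβ : Summable (rr p β)) {α : ℝ}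
    (hβα : β ≤ α) : Summable (rr p α) := summable_rr hp hβα hsβ

lemma upper_bound_left (hp : IsProbDist p) (hβ : β < 1) (hsβ : Summable (rr p β))
    (F : Finset ℕ) {α : ℝ} (hα : β < α) (hα1 : α < 1) :
    renyiEntropy p α ≤ ENNReal.ofReal ((∑ n ∈ F, (p n - rr p α n) / (α - 1)) +
      ∑' n : ↑(↑F : Set ℕ)ᶜ, (rr p β (↑n) - p (↑n)) / (1 - β)) := by
  have hp0 := hp.1
  have hp1 := le_one hp
  have ht : (0:ℝ) < 1 - α := by linarith
  have hs : (0:ℝ) < 1 - β := by linarith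
  have hsumα : Summable (rr p α) := summable_rr hp hα.le hsβ
  have hS0 : 0 < ∑' n, rr p α n := tsum_rr_pos hp hsumα
  set S := ∑' n, rr p α n with hSdef
  have hDsum : Summable (fun n => (rr p β n - p n) / (1 - β)) :=
    (hsβ.sub hp.2.summable).div_const _
  have hsumsub : Summable (fun n => rr p α n - p n) := hsumα.sub hp.2.summable
  have hScompl : (∑ n ∈ F, (rr p α n - p n)) +
      (∑' n : ↑(↑F : Set ℕ)ᶜ, (rr p α (↑n) - p (↑n))) = S - 1 := by
    rw [Summable.sum_add_tsum_compl hsumsub, Summable.tsum_sub hsumα hp.2.summable, hp.2.tsum_eq]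
  have htail : (∑' n : ↑(↑F : Set ℕ)ᶜ, (rr p α (↑n) - p (↑n))) ≤
      (1 - α) * ∑' n : ↑(↑F : Set ℕ)ᶜ, (rr p β (↑n) - p (↑n)) / (1 - β) := by
    rw [← tsum_mul_left]
    refine Summable.tsum_le_tsum (fun n => ?_) (hsumsub.subtype _) ((hDsum.mul_left (1 - α)).subtype _)
    have h := key_left hp hα1 hα.le (↑n)
    calc rr p α (↑n : ℕ) - p (↑n) ≤ (1 - α) / (1 - β) * (rr p β (↑n) - p (↑n)) := h
      _ = (1 - α) * ((rr p β (↑n) - p (↑n)) / (1 - β)) := by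
          rw [div_mul_eq_mul_div, mul_div_assoc]
  rw [renyiEntropy_eq hp0 hα1.ne hsumα]
  apply ENNReal.ofReal_le_ofReal
  have hlog : Real.log S ≤ S - 1 := Real.log_le_sub_one_of_pos hS0
  have hsumF : (∑ n ∈ F, (p n - rr p α n) / (α - 1)) =
      (∑ n ∈ F, (rr p α n - p n)) / (1 - α) := by
    rw [Finset.sum_congr rfl fun n _ => term_flip, ← Finset.sum_div]
  set T := ∑' n : ↑(↑F : Set ℕ)ᶜ, (rr p β (↑n) - p (↑n)) / (1 - β) with hTdef
  have hinvt : (0:ℝ) ≤ (1 - α)⁻¹ := inv_nonneg.2 ht.le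
  calc (1 - α)⁻¹ * Real.log S ≤ (1 - α)⁻¹ * (S - 1) :=
        mul_le_mul_of_nonneg_left hlog hinvt
    _ ≤ (1 - α)⁻¹ * ((∑ n ∈ F, (rr p α n - p n)) + (1 - α) * T) := by
        refine mul_le_mul_of_nonneg_left ?_ hinvt
        rw [← hScompl]
        exact add_le_add_right htail _
    _ = (∑ n ∈ F, (rr p α n - p n)) / (1 - α) + T := by
        field_simp
    _ = (∑ n ∈ F, (p n - rr p α n) / (α - 1)) + T := by rw [hsumF]

lemma lower_bound_left (hp : IsProbDist p) (hβ : β < 1) (hsβ : Summable (rr p β))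
    (F : Finset ℕ) {α : ℝ} (hα : β < α) (hα1 : α < 1) :
    ENNReal.ofReal ((∑ n ∈ F, (p n - rr p α n) / (α - 1)) *
      (1 + (1 - α) * ∑' n, (rr p β n - p n) / (1 - β))⁻¹) ≤ renyiEntropy p α := by
  have hp0 := hp.1
  have hp1 := le_one hp
  have ht : (0:ℝ) < 1 - α := by linarith
  have hs : (0:ℝ) < 1 - β := by linarith
  have hsumα : Summable (rr p α) := summable_rr hp hα.le hsβ
  have hS0 : 0 < ∑' n, rr p α n := tsum_rr_pos hp hsumα
  set S := ∑' n, rr p α n with hSdef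
  have hDsum : Summable (fun n => (rr p β n - p n) / (1 - β)) :=
    (hsβ.sub hp.2.summable).div_const _
  set C := ∑' n, (rr p β n - p n) / (1 - β) with hCdef
  have hD0 : ∀ n, (0:ℝ) ≤ (rr p β n - p n) / (1 - β) := fun n =>
    div_nonneg (sub_nonneg.2 (by simpa [rr_one] using rr_anti hp0 hp1 hβ.le n)) hs.le
  have hC0 : (0:ℝ) ≤ C := tsum_nonneg hD0
  have hterm : ∀ n, (0:ℝ) ≤ rr p α n - p n := fun n =>
    sub_nonneg.2 (by simpa [rr_one] using rr_anti hp0 hp1 hα1.le n)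
  have hsumsub : Summable (fun n => rr p α n - p n) := hsumα.sub hp.2.summable
  have hSsub : ∑' n, (rr p α n - p n) = S - 1 := by
    rw [Summable.tsum_sub hsumα hp.2.summable, hp.2.tsum_eq]
  have hS1 : (0:ℝ) ≤ S - 1 := by
    rw [← hSsub]; exact tsum_nonneg hterm
  have hSle : S ≤ 1 + (1 - α) * C := by
    have : S - 1 ≤ (1 - α) * C := by
      rw [← hSsub, hCdef, ← tsum_mul_left]
      refine Summable.tsum_le_tsum (fun n => ?_) hsumsub (hDsum.mul_left _)
      calc rr p α n - p n ≤ (1 - α) / (1 - β) * (rr p β n - p n) := key_left hp hα1 hα.le n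
        _ = (1 - α) * ((rr p β n - p n) / (1 - β)) := by
            rw [div_mul_eq_mul_div, mul_div_assoc]
    linarith
  have hden : (0:ℝ) < 1 + (1 - α) * C := by nlinarith
  rw [renyiEntropy_eq hp0 hα1.ne hsumα]
  apply ENNReal.ofReal_le_ofReal
  have hFle : ∑ n ∈ F, (rr p α n - p n) ≤ S - 1 := by
    rw [← hSsub]
    exact Summable.sum_le_tsum F (fun n _ => hterm n) hsumsub
  have hlogS : (S - 1) / S ≤ Real.log S := by
    have hx := Real.log_le_sub_one_of_pos (inv_pos.2 hS0)
    rw [Real.log_inv] at hx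
    have hy : (S:ℝ)⁻¹ - 1 = -((S - 1) / S) := by field_simp; ring
    linarith
  have hfrac : (∑ n ∈ F, (rr p α n - p n)) / (1 + (1 - α) * C) ≤ (S - 1) / S :=
    div_le_div₀ hS1 hFle hS0 hSle
  have hsumF : (∑ n ∈ F, (p n - rr p α n) / (α - 1)) =
      (∑ n ∈ F, (rr p α n - p n)) / (1 - α) := by
    rw [Finset.sum_congr rfl fun n _ => term_flip, ← Finset.sum_div]
  have hinvt : (0:ℝ) ≤ (1 - α)⁻¹ := inv_nonneg.2 ht.le
  calc (∑ n ∈ F, (p n - rr p α n) / (α - 1)) * (1 + (1 - α) * C)⁻¹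
      = (1 - α)⁻¹ * ((∑ n ∈ F, (rr p α n - p n)) / (1 + (1 - α) * C)) := by
        rw [hsumF]; field_simp
    _ ≤ (1 - α)⁻¹ * ((S - 1) / S) := mul_le_mul_of_nonneg_left hfrac hinvt
    _ ≤ (1 - α)⁻¹ * Real.log S := mul_le_mul_of_nonneg_left hlogS hinvt


lemma tendsto_left (hp : IsProbDist p) (hβ : β < 1) (hsβ : Summable (rr p β)) :
    Tendsto (fun α : ℝ => renyiEntropy p α) (𝓝[<] (1:ℝ)) (𝓝 (shannonEntropy p)) := by
  have hp0 := hp.1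
  have hp1 := le_one hp
  have hs : (0:ℝ) < 1 - β := by linarith
  have hDsum : Summable (fun n => (rr p β n - p n) / (1 - β)) :=
    (hsβ.sub hp.2.summable).div_const _
  have hD0 : ∀ n, (0:ℝ) ≤ (rr p β n - p n) / (1 - β) := fun n =>
    div_nonneg (sub_nonneg.2 (by simpa [rr_one] using rr_anti hp0 hp1 hβ.le n)) hs.le
  have hsummH : Summable (fun n => -(p n * Real.log (p n))) :=
    hDsum.of_nonneg_of_le (fun n => ent_nonneg hp n) (fun n => ent_bound hp hβ n)
  set H := ∑' n, -(p n * Real.log (p n)) with hHdef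
  set C := ∑' n, (rr p β n - p n) / (1 - β) with hCdef
  have hH0 : 0 ≤ H := tsum_nonneg fun n => ent_nonneg hp n
  have hsh : shannonEntropy p = ENNReal.ofReal H := by
    rw [shannonEntropy, ← ENNReal.ofReal_tsum_of_nonneg (fun n => ent_nonneg hp n) hsummH]
  have hmemIoo : Set.Ioo β 1 ∈ 𝓝[<] (1:ℝ) := Ioo_mem_nhdsLT_of_mem ⟨hβ, le_refl 1⟩
  have hmono : 𝓝[<] (1:ℝ) ≤ 𝓝[≠] (1:ℝ) := nhdsWithin_mono _ fun x hx => hx.ne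
  have hdenT : Tendsto (fun α : ℝ => (1 + (1 - α) * C)⁻¹) (𝓝[<] (1:ℝ)) (𝓝 1) := by
    have h2' : Tendsto (fun α : ℝ => 1 + (1 - α) * C) (𝓝 (1:ℝ)) (𝓝 (1 + (1 - 1) * C)) :=
      tendsto_const_nhds.add ((tendsto_const_nhds.sub tendsto_id).mul_const C)
    have h2 : Tendsto (fun α : ℝ => 1 + (1 - α) * C) (𝓝 (1:ℝ)) (𝓝 1) := by simpa using h2'
    have h3 := (h2.inv₀ one_ne_zero).mono_left (nhdsWithin_le_nhds (s := Set.Iio (1:ℝ)))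
    simpa using h3
  refine tendsto_order.2 ⟨fun c hc => ?_, fun c hc => ?_⟩
  · rw [shannonEntropy, ENNReal.tsum_eq_iSup_sum, lt_iSup_iff] at hc
    obtain ⟨F, hF⟩ := hc
    have hF' : c < ENNReal.ofReal (∑ n ∈ F, -(p n * Real.log (p n))) := by
      rwa [ENNReal.ofReal_sum_of_nonneg (fun n _ => ent_nonneg hp n)]
    have hgF : Tendsto (fun α : ℝ => ∑ n ∈ F, (p n - rr p α n) / (α - 1)) (𝓝[<] (1:ℝ))
        (𝓝 (∑ n ∈ F, -(p n * Real.log (p n)))) :=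
      (tendsto_finset_sum F fun n _ => tendsto_slope hp0 n).mono_left hmono
    have hprod : Tendsto (fun α : ℝ => (∑ n ∈ F, (p n - rr p α n) / (α - 1)) *
        (1 + (1 - α) * C)⁻¹) (𝓝[<] (1:ℝ)) (𝓝 (∑ n ∈ F, -(p n * Real.log (p n)))) := by
      have := hgF.mul hdenT
      simpa using this
    have h1 := (ENNReal.continuous_ofReal.tendsto _).comp hprod
    filter_upwards [h1.eventually_const_lt hF', hmemIoo] with α h2 h3
    exact h2.trans_le (lower_bound_left hp hβ hsβ F h3.1 h3.2)
  · by_cases hctop : c = ⊤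
    · filter_upwards [hmemIoo] with α hα
      rw [hctop, renyiEntropy_eq hp0 hα.2.ne (summable_rr hp hα.1.le hsβ)]
      exact ENNReal.ofReal_lt_top
    · have hc' : H < c.toReal := by
        rw [hsh] at hc
        exact (ENNReal.ofReal_lt_iff_lt_toReal hH0 hctop).1 hc
      set ε := c.toReal - H with hεdef
      have hε : 0 < ε := by simp [hεdef]; linarith
      have hhasC : Tendsto (fun s : Finset ℕ => ∑ n ∈ s, (rr p β n - p n) / (1 - β))
          atTop (𝓝 C) := hDsum.hasSum
      obtain ⟨F, hF⟩ := (hhasC.eventually_const_lt (show C - ε/2 < C by linarith)).exists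
      have htail : (∑' n : ↑(↑F : Set ℕ)ᶜ, (rr p β (↑n) - p (↑n)) / (1 - β)) =
          C - ∑ n ∈ F, (rr p β n - p n) / (1 - β) := by
        have h := Summable.sum_add_tsum_compl (s := F) hDsum
        rw [hCdef]; linarith
      set T := ∑' n : ↑(↑F : Set ℕ)ᶜ, (rr p β (↑n) - p (↑n)) / (1 - β) with hTdef
      have hT : T < ε/2 := by rw [htail]; linarith
      set mF := ∑ n ∈ F, -(p n * Real.log (p n)) with hmFdef
      have hmFH : mF ≤ H := Summable.sum_le_tsum F (fun n _ => ent_nonneg hp n) hsummH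
      have hgF : Tendsto (fun α : ℝ => (∑ n ∈ F, (p n - rr p α n) / (α - 1)) + T)
          (𝓝[<] (1:ℝ)) (𝓝 (mF + T)) :=
        ((tendsto_finset_sum F fun n _ => tendsto_slope hp0 n).mono_left hmono).add_const T
      have h1 := (ENNReal.continuous_ofReal.tendsto _).comp hgF
      have hlt : ENNReal.ofReal (mF + T) < c := by
        have h2 : mF + T < c.toReal := by linarith
        calc ENNReal.ofReal (mF + T) < ENNReal.ofReal c.toReal := by
              rw [ENNReal.ofReal_lt_ofReal_iff (by linarith)]
              exact h2
          _ = c := ENNReal.ofReal_toReal hctop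
      filter_upwards [h1.eventually_lt_const hlt, hmemIoo] with α h2 h3
      exact lt_of_le_of_lt (upper_bound_left hp hβ hsβ F h3.1 h3.2) h2

end Left

end Stmt16Aux

/-- `lim_{α→1+} H_α(P) = H₁(P)` (both sides possibly infinite);
moreover, if `α_c(P) < 1` then `lim_{α→1} H_α(P) = H₁(P)`. -/
theorem stmt16 (p : ℕ → ℝ) (hp : IsProbDist p) :
    Tendsto (fun α : ℝ => renyiEntropy p α) (𝓝[>] 1) (𝓝 (renyiEntropy p 1)) ∧
    (criticalExponent p < 1 →
      Tendsto (fun α : ℝ => renyiEntropy p α) (𝓝[≠] 1)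
        (𝓝 (renyiEntropy p 1))) := by
  have h1 : renyiEntropy p 1 = shannonEntropy p := by rw [renyiEntropy, if_pos rfl]
  constructor
  · rw [h1]; exact Stmt16Aux.tendsto_right hp
  · intro hcrit
    have hne : (convRegion p).Nonempty := by
      refine ⟨2, ⟨by norm_num, ?_⟩⟩
      rw [Stmt16Aux.renyiEntropy_eq hp.1 (by norm_num)
        (Stmt16Aux.summable_rr hp one_le_two (Stmt16Aux.summable_rr_one hp))]
      exact ENNReal.ofReal_lt_top
    have hbdd : BddBelow (convRegion p) := ⟨0, fun x hx => hx.1⟩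
    obtain ⟨β, hβmem, hβ1⟩ := (csInf_lt_iff hbdd hne).1 hcrit
    have hsumβ : Summable (Stmt16Aux.rr p β) := by
      have h2 := hβmem.2
      rw [renyiEntropy, if_neg hβ1.ne] at h2
      by_cases hrs : renyiSum p β = ⊤
      · rw [if_pos hrs] at h2; exact absurd h2 (lt_irrefl ⊤)
      · rw [Stmt16Aux.renyiSum_eq] at hrs
        exact (ENNReal.summable_toReal hrs).congr fun n =>
          ENNReal.toReal_ofReal (Stmt16Aux.rr_nonneg hp.1 β n)
    rw [h1]
    have heq : 𝓝[≠] (1:ℝ) = 𝓝[<] (1:ℝ) ⊔ 𝓝[>] (1:ℝ) := by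
      rw [← nhdsWithin_union, Set.Iio_union_Ioi]
    rw [heq]
    exact tendsto_sup.2 ⟨Stmt16Aux.tendsto_left hp hβ1 hsumβ, Stmt16Aux.tendsto_right hp⟩
end

section
/- For any sequence (p_1, p_2, …) with p_n ≥ 0 and Σ_{n=1}^∞ p_n = 1, lim_{ε→0+} (Σ_{n=1}^∞ p_n^{1+ε})^{1/ε} = ∏_{n=1}^∞ p_n^{p_n}, where the infinite product is interpreted as exp(Σ_{n=1}^∞ p_n log p_n) and equals 0 when Σ_{n=1}^∞ p_n log p_n = −∞ (with the convention 0^0 = 1 in the product). -/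
open Filter Topology
open scoped ENNReal

noncomputable def hAux (p : ℕ → ℝ) (ε : ℝ) (n : ℕ) : ℝ :=
  if p n = 0 then 0 else p n ^ (1 + ε)

lemma hAux_nonneg {p : ℕ → ℝ} (hp0 : ∀ n, 0 ≤ p n) (ε : ℝ) (n : ℕ) :
    0 ≤ hAux p ε n := by
  unfold hAux; split
  · exact le_refl 0
  · exact Real.rpow_nonneg (hp0 n) _

lemma hAux_le {p : ℕ → ℝ} (hp0 : ∀ n, 0 ≤ p n) (hp1 : ∀ n, p n ≤ 1)
    {ε : ℝ} (hε : 0 ≤ ε) (n : ℕ) : hAux p ε n ≤ p n := by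
  unfold hAux; split
  · next h => simp [h]
  · next h =>
    have hpos : 0 < p n := lt_of_le_of_ne (hp0 n) (Ne.symm h)
    calc p n ^ (1 + ε) ≤ p n ^ (1:ℝ) :=
          Real.rpow_le_rpow_of_exponent_ge hpos (hp1 n) (by linarith)
      _ = p n := Real.rpow_one _

lemma hAux_key {p : ℕ → ℝ} (hp0 : ∀ n, 0 ≤ p n) (hp1 : ∀ n, p n ≤ 1)
    {ε : ℝ} (hε : 0 < ε) (n : ℕ) :
    ε * (p n * Real.log (p n)) ≤ hAux p ε n - p n ∧ hAux p ε n - p n ≤ 0 := by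
  unfold hAux
  split
  · next h => simp [h]
  · next h =>
    have hpos : 0 < p n := lt_of_le_of_ne (hp0 n) (Ne.symm h)
    have heq : p n ^ (1 + ε) = p n * Real.exp (Real.log (p n) * ε) := by
      rw [Real.rpow_add hpos, Real.rpow_one, Real.rpow_def_of_pos hpos]
    constructor
    · rw [heq]
      have := Real.add_one_le_exp (Real.log (p n) * ε)
      nlinarith [hpos.le]
    · rw [heq]
      have h1 : Real.exp (Real.log (p n) * ε) = p n ^ ε := (Real.rpow_def_of_pos hpos ε).symm
      have h2 : p n ^ ε ≤ 1 := Real.rpow_le_one (hp0 n) (hp1 n) hε.le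
      nlinarith [hpos.le]

lemma hAux_tendsto {p : ℕ → ℝ} (hp0 : ∀ n, 0 ≤ p n) (n : ℕ) :
    Tendsto (fun ε => (hAux p ε n - p n) / ε) (𝓝[>] (0:ℝ))
      (𝓝 (p n * Real.log (p n))) := by
  by_cases h : p n = 0
  · simp only [hAux, h, if_true]
    simpa [h] using tendsto_const_nhds (α := ℝ) (f := 𝓝[>] (0:ℝ)) (a := (0:ℝ))
  · have hpos : 0 < p n := lt_of_le_of_ne (hp0 n) (Ne.symm h)
    set F : ℝ → ℝ := fun ε => p n * Real.exp (Real.log (p n) * ε) with hF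
    have hd : HasDerivAt F (p n * Real.log (p n)) 0 := by
      have h1 : HasDerivAt (fun ε : ℝ => Real.log (p n) * ε) (Real.log (p n)) 0 := by
        simpa using (hasDerivAt_id (0:ℝ)).const_mul (Real.log (p n))
      have h2 := (h1.exp).const_mul (p n)
      simpa using h2
    have hslope := hasDerivAt_iff_tendsto_slope.mp hd
    have hmono : 𝓝[>] (0:ℝ) ≤ 𝓝[≠] (0:ℝ) :=
      nhdsWithin_mono _ (fun x hx => ne_of_gt hx)
    have hslope' := hslope.mono_left hmono
    refine hslope'.congr' ?_
    filter_upwards [self_mem_nhdsWithin] with ε (hε : (0:ℝ) < ε)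
    rw [slope_def_field]
    have heq : hAux p ε n = F ε := by
      simp only [hAux, h, if_false, hF]
      rw [Real.rpow_add hpos, Real.rpow_one, Real.rpow_def_of_pos hpos]
    simp [heq, hF]

lemma hAux_summable {p : ℕ → ℝ} (hp0 : ∀ n, 0 ≤ p n) (hp1 : ∀ n, p n ≤ 1)
    (hps : Summable p) {ε : ℝ} (hε : 0 ≤ ε) : Summable (hAux p ε) :=
  Summable.of_nonneg_of_le (hAux_nonneg hp0 ε) (hAux_le hp0 hp1 hε) hps

lemma renyiSum_eq_s17 {p : ℕ → ℝ} (hp0 : ∀ n, 0 ≤ p n) (hp1 : ∀ n, p n ≤ 1)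
    (hps : Summable p) {ε : ℝ} (hε : 0 ≤ ε) :
    (∑' n, if p n = 0 then 0 else ENNReal.ofReal (p n ^ (1 + ε)))
      = ENNReal.ofReal (∑' n, hAux p ε n) := by
  rw [ENNReal.ofReal_tsum_of_nonneg (hAux_nonneg hp0 ε) (hAux_summable hp0 hp1 hps hε)]
  refine tsum_congr fun n => ?_
  unfold hAux
  split <;> simp

lemma S_pos {p : ℕ → ℝ} (hp0 : ∀ n, 0 ≤ p n) (hp1 : ∀ n, p n ≤ 1)
    (hps : Summable p) {n₀ : ℕ} (hn₀ : p n₀ ≠ 0) {ε : ℝ} (hε : 0 ≤ ε) :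
    0 < ∑' n, hAux p ε n := by
  have hpos : 0 < p n₀ := lt_of_le_of_ne (hp0 n₀) (Ne.symm hn₀)
  have h1 : hAux p ε n₀ ≤ ∑' n, hAux p ε n :=
    Summable.le_tsum (hAux_summable hp0 hp1 hps hε) n₀ (fun j _ => hAux_nonneg hp0 ε j)
  have h2 : 0 < hAux p ε n₀ := by
    unfold hAux; rw [if_neg hn₀]; exact Real.rpow_pos_of_pos hpos _
  linarith

lemma g_eq {p : ℕ → ℝ} (hp0 : ∀ n, 0 ≤ p n) (hp1 : ∀ n, p n ≤ 1)
    (hps : HasSum p 1) {ε : ℝ} (hε : 0 < ε) :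
    (∑' n, (hAux p ε n - p n) / ε) = ((∑' n, hAux p ε n) - 1) / ε := by
  rw [tsum_div_const, Summable.tsum_sub (hAux_summable hp0 hp1 hps.summable hε.le) hps.summable,
    hps.tsum_eq]

lemma upper_bound {p : ℕ → ℝ} (hp0 : ∀ n, 0 ≤ p n) (hp1 : ∀ n, p n ≤ 1)
    (hps : Summable p) {n₀ : ℕ} (hn₀ : p n₀ ≠ 0) {ε : ℝ} (hε : 0 < ε) :
    (∑' n, hAux p ε n) ^ (1/ε) ≤ Real.exp (((∑' n, hAux p ε n) - 1) / ε) := by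
  set S := ∑' n, hAux p ε n with hS
  have hSpos : 0 < S := S_pos hp0 hp1 hps hn₀ hε.le
  rw [Real.rpow_def_of_pos hSpos]
  apply Real.exp_le_exp.mpr
  have h1 := Real.log_le_sub_one_of_pos hSpos
  calc Real.log S * (1/ε) = Real.log S / ε := by ring
    _ ≤ (S - 1) / ε := by gcongr

lemma term_abs_bound {p : ℕ → ℝ} (hp0 : ∀ n, 0 ≤ p n) (hp1 : ∀ n, p n ≤ 1)
    {ε : ℝ} (hε : 0 < ε) (n : ℕ) :
    ‖(hAux p ε n - p n) / ε‖ ≤ |p n * Real.log (p n)| := by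
  obtain ⟨h1, h2⟩ := hAux_key hp0 hp1 hε n
  rw [Real.norm_eq_abs, abs_div, abs_of_pos hε, div_le_iff₀ hε]
  have : |hAux p ε n - p n| = -(hAux p ε n - p n) := abs_of_nonpos h2
  rw [this]
  have h3 : -(hAux p ε n - p n) ≤ -(ε * (p n * Real.log (p n))) := by linarith
  calc -(hAux p ε n - p n) ≤ ε * -(p n * Real.log (p n)) := by linarith
    _ ≤ ε * |p n * Real.log (p n)| := by
        have := neg_abs_le (p n * Real.log (p n)); nlinarith
    _ = |p n * Real.log (p n)| * ε := by ring

-- Case A: entropy summable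
lemma caseA {p : ℕ → ℝ} (hp0 : ∀ n, 0 ≤ p n) (hp1 : ∀ n, p n ≤ 1)
    (hps : HasSum p 1) {n₀ : ℕ} (hn₀ : p n₀ ≠ 0)
    (hq : Summable (fun n => p n * Real.log (p n))) :
    Tendsto (fun ε : ℝ => (∑' n, hAux p ε n) ^ (1/ε)) (𝓝[>] (0:ℝ))
      (𝓝 (Real.exp (∑' n, p n * Real.log (p n)))) := by
  set L := ∑' n, p n * Real.log (p n) with hL
  -- g tends to L
  have hg : Tendsto (fun ε : ℝ => ∑' n, (hAux p ε n - p n) / ε) (𝓝[>] (0:ℝ)) (𝓝 L) := by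
    apply tendsto_tsum_of_dominated_convergence hq.abs (fun n => hAux_tendsto hp0 n)
    filter_upwards [self_mem_nhdsWithin] with ε (hε : (0:ℝ) < ε) n
    exact term_abs_bound hp0 hp1 hε n
  -- upper bound tendsto
  have hupT : Tendsto (fun ε : ℝ => Real.exp (∑' n, (hAux p ε n - p n) / ε))
      (𝓝[>] (0:ℝ)) (𝓝 (Real.exp L)) := (Real.continuous_exp.tendsto L).comp hg
  -- lower bound tendsto
  have hlowT : Tendsto (fun ε : ℝ => (1 + ε * L) ^ (1/ε)) (𝓝[>] (0:ℝ))
      (𝓝 (Real.exp L)) := by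
    have := (Real.tendsto_one_add_div_rpow_exp L).comp tendsto_inv_nhdsGT_zero
    refine this.congr' ?_
    filter_upwards [self_mem_nhdsWithin] with ε (hε : (0:ℝ) < ε)
    simp only [Function.comp_apply, one_div]
    congr 1; field_simp
  -- squeeze
  refine tendsto_of_tendsto_of_tendsto_of_le_of_le' hlowT hupT ?_ ?_
  · -- eventually (1+εL)^(1/ε) ≤ S^(1/ε)
    have hone : Tendsto (fun ε : ℝ => 1 + ε * L) (𝓝[>] (0:ℝ)) (𝓝 1) := by
      have : Tendsto (fun ε : ℝ => 1 + ε * L) (𝓝 (0:ℝ)) (𝓝 (1 + 0 * L)) :=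
        (continuous_const.add ((continuous_id).mul continuous_const)).tendsto 0
      simpa using this.mono_left nhdsWithin_le_nhds
    filter_upwards [self_mem_nhdsWithin,
      hone.eventually (eventually_gt_nhds (by norm_num : (0:ℝ) < 1))] with ε
        (hε : (0:ℝ) < ε) hpos1
    have hSle : 1 + ε * L ≤ ∑' n, hAux p ε n := by
      have hsub : Summable (fun n => hAux p ε n - p n) :=
        (hAux_summable hp0 hp1 hps.summable hε.le).sub hps.summable
      have hts : ε * L ≤ ∑' n, (hAux p ε n - p n) := by
        rw [hL, ← tsum_mul_left]
        exact Summable.tsum_le_tsum (fun n => (hAux_key hp0 hp1 hε n).1) (hq.mul_left ε) hsub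
      have := Summable.tsum_sub (hAux_summable hp0 hp1 hps.summable hε.le) hps.summable
      rw [this, hps.tsum_eq] at hts
      linarith
    exact Real.rpow_le_rpow hpos1.le hSle (by positivity)
  · -- eventually S^(1/ε) ≤ exp (g ε)
    filter_upwards [self_mem_nhdsWithin] with ε (hε : (0:ℝ) < ε)
    rw [g_eq hp0 hp1 hps hε]
    exact upper_bound hp0 hp1 hps.summable hn₀ hε

-- Case B: entropy not summable
lemma caseB {p : ℕ → ℝ} (hp0 : ∀ n, 0 ≤ p n) (hp1 : ∀ n, p n ≤ 1)
    (hps : HasSum p 1) {n₀ : ℕ} (hn₀ : p n₀ ≠ 0)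
    (hq : ¬ Summable (fun n => p n * Real.log (p n))) :
    Tendsto (fun ε : ℝ => (∑' n, hAux p ε n) ^ (1/ε)) (𝓝[>] (0:ℝ)) (𝓝 0) := by
  have hqle : ∀ n, p n * Real.log (p n) ≤ 0 := fun n =>
    mul_nonpos_of_nonneg_of_nonpos (hp0 n) (Real.log_nonpos (hp0 n) (hp1 n))
  -- g → atBot
  have hgbot : Tendsto (fun ε : ℝ => ∑' n, (hAux p ε n - p n) / ε) (𝓝[>] (0:ℝ)) atBot := by
    rw [tendsto_atBot]
    intro M
    have hnq : ¬ Summable (fun n => -(p n * Real.log (p n))) := by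
      intro h; exact hq (by simpa using h.neg)
    have hpart := (not_summable_iff_tendsto_nat_atTop_of_nonneg
      (fun n => neg_nonneg.2 (hqle n))).mp hnq
    obtain ⟨N, hN⟩ := (hpart.eventually (eventually_ge_atTop (1 - M))).exists
    have hsumN : ∑ i ∈ Finset.range N, p i * Real.log (p i) ≤ M - 1 := by
      have : ∑ i ∈ Finset.range N, -(p i * Real.log (p i))
          = -(∑ i ∈ Finset.range N, p i * Real.log (p i)) := by
        rw [Finset.sum_neg_distrib]
      rw [this] at hN; linarith
    have hfin : Tendsto (fun ε : ℝ => ∑ i ∈ Finset.range N, (hAux p ε i - p i) / ε)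
        (𝓝[>] (0:ℝ)) (𝓝 (∑ i ∈ Finset.range N, p i * Real.log (p i))) :=
      tendsto_finset_sum _ (fun i _ => hAux_tendsto hp0 i)
    have hev : ∀ᶠ ε in 𝓝[>] (0:ℝ),
        ∑ i ∈ Finset.range N, (hAux p ε i - p i) / ε < M :=
      hfin.eventually_lt_const (by linarith)
    filter_upwards [self_mem_nhdsWithin, hev] with ε (hε : (0:ℝ) < ε) hev'
    have hsub : Summable (fun n => (hAux p ε n - p n) / ε) :=
      ((hAux_summable hp0 hp1 hps.summable hε.le).sub hps.summable).div_const ε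
    have hle : (∑' n, (hAux p ε n - p n) / ε)
        ≤ ∑ i ∈ Finset.range N, (hAux p ε i - p i) / ε := by
      have hterm : ∀ n, (hAux p ε n - p n) / ε ≤ 0 := fun n =>
        div_nonpos_of_nonpos_of_nonneg (hAux_key hp0 hp1 hε n).2 hε.le
      have h1 := Summable.sum_le_tsum (Finset.range N)
        (fun i _ => neg_nonneg.2 (hterm i)) hsub.neg
      rw [tsum_neg, Finset.sum_neg_distrib] at h1
      linarith
    linarith
  -- exp ∘ g → 0
  have hupT : Tendsto (fun ε : ℝ => Real.exp (∑' n, (hAux p ε n - p n) / ε))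
      (𝓝[>] (0:ℝ)) (𝓝 0) := Real.tendsto_exp_atBot.comp hgbot
  refine tendsto_of_tendsto_of_tendsto_of_le_of_le' tendsto_const_nhds hupT ?_ ?_
  · filter_upwards [self_mem_nhdsWithin] with ε (hε : (0:ℝ) < ε)
    exact Real.rpow_nonneg (tsum_nonneg (fun n => hAux_nonneg hp0 ε n)) _
  · filter_upwards [self_mem_nhdsWithin] with ε (hε : (0:ℝ) < ε)
    rw [g_eq hp0 hp1 hps hε]
    exact upper_bound hp0 hp1 hps.summable hn₀ hε


lemma renyiSum_eq' {p : ℕ → ℝ} (hp0 : ∀ n, 0 ≤ p n) (hp1 : ∀ n, p n ≤ 1)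
    (hps : Summable p) {ε : ℝ} (hε : 0 ≤ ε) :
    renyiSum p (1 + ε) = ENNReal.ofReal (∑' n, hAux p ε n) :=
  renyiSum_eq_s17 hp0 hp1 hps hε

/-- `lim_{ε→0+} (∑ pₙ^{1+ε})^{1/ε} = ∏ pₙ^{pₙ}`, where the
infinite product means `exp(∑ pₙ log pₙ) = exp(-H₁(P))`, interpreted as `0`
when the Shannon entropy is infinite. -/
theorem stmt17 (p : ℕ → ℝ) (hp : IsProbDist p) :
    Tendsto (fun ε : ℝ => renyiSum p (1 + ε) ^ (1 / ε)) (𝓝[>] 0)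
      (𝓝 (if shannonEntropy p = ∞ then 0
        else ENNReal.ofReal (Real.exp (-(shannonEntropy p).toReal)))) := by
  obtain ⟨hp0, hps⟩ := hp
  have hp1 : ∀ n, p n ≤ 1 := fun n => le_hasSum hps n (fun j _ => hp0 j)
  have hn₀ : ∃ n₀, p n₀ ≠ 0 := by
    by_contra habs
    push_neg at habs
    have h0 : HasSum p 0 := by simpa [funext habs] using (hasSum_zero : HasSum (fun _ : ℕ => (0:ℝ)) 0)
    exact one_ne_zero (hps.unique h0)
  obtain ⟨n₀, hn₀⟩ := hn₀
  have hqle : ∀ n, p n * Real.log (p n) ≤ 0 := fun n =>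
    mul_nonpos_of_nonneg_of_nonpos (hp0 n) (Real.log_nonpos (hp0 n) (hp1 n))
  have heq : (fun ε : ℝ => renyiSum p (1 + ε) ^ (1 / ε))
      =ᶠ[𝓝[>] (0:ℝ)] fun ε => ENNReal.ofReal ((∑' n, hAux p ε n) ^ (1/ε)) := by
    filter_upwards [self_mem_nhdsWithin] with ε (hε : (0:ℝ) < ε)
    rw [renyiSum_eq' hp0 hp1 hps.summable hε.le,
      ENNReal.ofReal_rpow_of_pos (S_pos hp0 hp1 hps.summable hn₀ hε.le)]
  by_cases hq : Summable (fun n => p n * Real.log (p n))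
  · -- finite entropy
    have hSE : shannonEntropy p = ENNReal.ofReal (∑' n, -(p n * Real.log (p n))) :=
      (ENNReal.ofReal_tsum_of_nonneg (fun n => neg_nonneg.2 (hqle n)) hq.neg).symm
    have hne : shannonEntropy p ≠ ∞ := by rw [hSE]; exact ENNReal.ofReal_ne_top
    have htr : (shannonEntropy p).toReal = -(∑' n, p n * Real.log (p n)) := by
      rw [hSE, ENNReal.toReal_ofReal (tsum_nonneg (fun n => neg_nonneg.2 (hqle n))),
        tsum_neg]
    rw [if_neg hne, htr, neg_neg]
    have hA := caseA hp0 hp1 hps hn₀ hq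
    have := (ENNReal.continuous_ofReal.tendsto _).comp hA
    exact this.congr' heq.symm
  · -- infinite entropy
    have hSE : shannonEntropy p = ∞ := by
      by_contra hne
      have h1 : Summable (fun n => (ENNReal.ofReal (-(p n * Real.log (p n)))).toReal) :=
        ENNReal.summable_toReal hne
      have h2 : (fun n => (ENNReal.ofReal (-(p n * Real.log (p n)))).toReal)
          = fun n => -(p n * Real.log (p n)) := by
        funext n; exact ENNReal.toReal_ofReal (neg_nonneg.2 (hqle n))
      rw [h2] at h1
      exact hq (by simpa using h1.neg)
    rw [if_pos hSE]
    have hB := caseB hp0 hp1 hps hn₀ hq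
    have := (ENNReal.continuous_ofReal.tendsto _).comp hB
    simp only [Function.comp_def, ENNReal.ofReal_zero] at this
    exact this.congr' heq.symm
end

section
/- Let P be a probability distribution over the positive integers. Then for every r ∈ [0, ∞] there exists a sequence of probability distributions P_n with d_TV(P_n, P) → 0 such that lim_{n→∞} lim_{α→1+} H_α(P_n) = H_1(P) + r; yet for every sequence of probability distributions P_n with d_TV(P_n, P) → 0 one has lim_{α→1+} lim_{n→∞} H_α(P_n) = H_1(P) (the inner limit lim_{n→∞} H_α(P_n) existing and equaling H_α(P) for each α > 1). In particular the two iterated limits may differ by any prescribed r ∈ [0, ∞]. -/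
open Filter Topology
open scoped ENNReal

section basic
variable {q : ℕ → ℝ} (hq : IsProbDist q)
include hq

lemma aux_le_one_s19 (n : ℕ) : q n ≤ 1 :=
  le_hasSum hq.2 n (fun m _ => hq.1 m)

lemma aux_summable : Summable q := hq.2.summable

lemma aux_rpow_le_self_s19 {α : ℝ} (hα : 1 ≤ α) (n : ℕ) : q n ^ α ≤ q n := by
  have := Real.rpow_le_rpow_of_exponent_ge' (hq.1 n) (aux_le_one_s19 hq n) zero_le_one hα
  simpa using this

lemma aux_rpow_summable {α : ℝ} (hα : 1 ≤ α) : Summable (fun n => q n ^ α) :=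
  Summable.of_nonneg_of_le (fun n => Real.rpow_nonneg (hq.1 n) α)
    (aux_rpow_le_self_s19 hq hα) (aux_summable hq)

lemma aux_tsum_rpow_le_one {α : ℝ} (hα : 1 ≤ α) : (∑' n, q n ^ α) ≤ 1 := by
  have := Summable.tsum_le_tsum (aux_rpow_le_self_s19 hq hα) (aux_rpow_summable hq hα) (aux_summable hq)
  simpa [hq.2.tsum_eq] using this

lemma aux_exists_pos : ∃ n, 0 < q n := by
  by_contra h
  push_neg at h
  have h0 : q = 0 := funext fun n => le_antisymm (h n) (hq.1 n)
  have h1 : HasSum (0 : ℕ → ℝ) 1 := h0 ▸ hq.2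
  exact one_ne_zero (hasSum_zero.unique h1).symm

lemma aux_tsum_rpow_pos {α : ℝ} (hα : 1 ≤ α) : 0 < (∑' n, q n ^ α) := by
  obtain ⟨n, hn⟩ := aux_exists_pos hq
  exact Summable.tsum_pos (aux_rpow_summable hq hα) (fun i => Real.rpow_nonneg (hq.1 i) α) n
    (Real.rpow_pos_of_pos hn α)

lemma aux_renyiSum_eq {α : ℝ} (hα : 1 ≤ α) :
    renyiSum q α = ENNReal.ofReal (∑' n, q n ^ α) := by
  rw [renyiSum, ENNReal.ofReal_tsum_of_nonneg (fun n => Real.rpow_nonneg (hq.1 n) α)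
    (aux_rpow_summable hq hα)]
  refine tsum_congr fun n => ?_
  split_ifs with h
  · simp [h, Real.zero_rpow (by positivity : α ≠ 0)]
  · rfl

lemma aux_renyiEntropy_eq {α : ℝ} (hα : 1 < α) :
    renyiEntropy q α = ENNReal.ofReal ((1 - α)⁻¹ * Real.log (∑' n, q n ^ α)) := by
  rw [renyiEntropy, if_neg (by linarith), aux_renyiSum_eq hq (by linarith), if_neg (by simp),
    ENNReal.toReal_ofReal (tsum_nonneg fun n => Real.rpow_nonneg (hq.1 n) α)]

end basic

-- Lipschitz-type bound for rpow on [0,1]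
lemma aux_rpow_sub_le {α x y : ℝ} (hα : 1 ≤ α) (hy : 0 ≤ y) (hyx : y ≤ x) (hx : x ≤ 1) :
    x ^ α - y ^ α ≤ α * (x - y) := by
  set g : ℝ → ℝ := fun t => α * t - t ^ α with hg
  have hd : ∀ t : ℝ, HasDerivAt g (α - α * t ^ (α - 1)) t := fun t => by
    have h1 : HasDerivAt (fun t : ℝ => t ^ α) (α * t ^ (α - 1)) t :=
      Real.hasDerivAt_rpow_const (Or.inr hα)
    have h2 := ((hasDerivAt_id t).const_mul α).sub h1
    simp only [mul_one] at h2
    exact h2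
  have hm : MonotoneOn g (Set.Icc 0 1) := by
    apply monotoneOn_of_deriv_nonneg (convex_Icc 0 1)
    · exact fun t _ => (hd t).continuousAt.continuousWithinAt
    · exact fun t _ => ((hd t).differentiableAt).differentiableWithinAt
    · intro t ht
      rw [interior_Icc] at ht
      rw [(hd t).deriv]
      have : t ^ (α - 1) ≤ 1 :=
        Real.rpow_le_one ht.1.le ht.2.le (by linarith)
      nlinarith [ht.1.le, this]
  have := hm ⟨hy, le_trans hyx hx⟩ ⟨le_trans hy hyx, hx⟩ hyx
  simp only [hg] at this
  linarith

lemma aux_abs_rpow_sub_le {α x y : ℝ} (hα : 1 ≤ α) (hx0 : 0 ≤ x) (hx1 : x ≤ 1)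
    (hy0 : 0 ≤ y) (hy1 : y ≤ 1) : |x ^ α - y ^ α| ≤ α * |x - y| := by
  rcases le_total y x with h | h
  · rw [abs_of_nonneg (by nlinarith [Real.rpow_le_rpow hy0 h (le_trans zero_le_one hα)] : (0:ℝ) ≤ x ^ α - y ^ α), abs_of_nonneg (by linarith)]
    exact aux_rpow_sub_le hα hy0 h hx1
  · rw [abs_sub_comm, abs_sub_comm x y,
      abs_of_nonneg (by nlinarith [Real.rpow_le_rpow hx0 h (le_trans zero_le_one hα)] : (0:ℝ) ≤ y ^ α - x ^ α), abs_of_nonneg (by linarith)]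
    exact aux_rpow_sub_le hα hx0 h hy1

section lemA
variable {p : ℕ → ℝ} (hp : IsProbDist p)
include hp

lemma aux_abs_sub_summable {P : ℕ → ℝ} (hP : IsProbDist P) :
    Summable (fun k => |P k - p k|) :=
  Summable.of_nonneg_of_le (fun k => abs_nonneg _)
    (fun k => (abs_sub _ _).trans (by rw [abs_of_nonneg (hP.1 k), abs_of_nonneg (hp.1 k)]))
    ((aux_summable hP).add (aux_summable hp))

lemma aux_dTV_nonneg {P : ℕ → ℝ} : 0 ≤ dTV P p :=
  tsum_nonneg fun k => abs_nonneg _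

lemma aux_tsum_rpow_dist {P : ℕ → ℝ} (hP : IsProbDist P) {α : ℝ} (hα : 1 ≤ α) :
    |(∑' k, P k ^ α) - ∑' k, p k ^ α| ≤ α * dTV P p := by
  rw [← Summable.tsum_sub (aux_rpow_summable hP hα) (aux_rpow_summable hp hα)]
  have hsum : Summable (fun k => |P k ^ α - p k ^ α|) :=
    Summable.of_nonneg_of_le (fun k => abs_nonneg _)
      (fun k => aux_abs_rpow_sub_le hα (hP.1 k) (aux_le_one_s19 hP k) (hp.1 k) (aux_le_one_s19 hp k))
      ((aux_abs_sub_summable hp hP).mul_left α)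
  calc |∑' k, (P k ^ α - p k ^ α)| ≤ ∑' k, |P k ^ α - p k ^ α| := by
        simpa using norm_tsum_le_tsum_norm (f := fun k => P k ^ α - p k ^ α) (by simpa using hsum)
    _ ≤ ∑' k, α * |P k - p k| :=
        Summable.tsum_le_tsum (fun k => aux_abs_rpow_sub_le hα (hP.1 k) (aux_le_one_s19 hP k) (hp.1 k) (aux_le_one_s19 hp k))
          hsum ((aux_abs_sub_summable hp hP).mul_left α)
    _ = α * dTV P p := by rw [dTV, tsum_mul_left]

theorem lemA (P : ℕ → ℕ → ℝ) (hP : ∀ n, IsProbDist (P n))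
    (hTV : Tendsto (fun n => dTV (P n) p) atTop (𝓝 0)) {α : ℝ} (hα : 1 < α) :
    Tendsto (fun n => renyiEntropy (P n) α) atTop (𝓝 (renyiEntropy p α)) := by
  have hS : Tendsto (fun n => ∑' k, P n k ^ α) atTop (𝓝 (∑' k, p k ^ α)) := by
    rw [tendsto_iff_dist_tendsto_zero]
    apply squeeze_zero (fun n => dist_nonneg) (fun n => ?_)
      (by simpa using hTV.const_mul α)
    rw [Real.dist_eq]
    exact aux_tsum_rpow_dist hp (hP n) hα.le
  have hpos : 0 < ∑' k, p k ^ α := aux_tsum_rpow_pos hp hα.le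
  have hlog : Tendsto (fun n => (1 - α)⁻¹ * Real.log (∑' k, P n k ^ α)) atTop
      (𝓝 ((1 - α)⁻¹ * Real.log (∑' k, p k ^ α))) :=
    (((Real.continuousAt_log hpos.ne').tendsto.comp hS).const_mul _)
  have := (ENNReal.continuous_ofReal.tendsto _).comp hlog
  rw [aux_renyiEntropy_eq hp hα]
  refine this.congr fun n => ?_
  rw [Function.comp_apply, aux_renyiEntropy_eq (hP n) hα]

end lemA

lemma aux_slope {c : ℝ} (hc0 : 0 ≤ c) :
    Tendsto (fun α : ℝ => (c - c ^ α) / (α - 1)) (𝓝[>] 1) (𝓝 (Real.negMulLog c)) := by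
  rcases eq_or_lt_of_le hc0 with h | h
  · have : ∀ᶠ α in 𝓝[>] (1:ℝ), (c - c ^ α) / (α - 1) = 0 := by
      filter_upwards [self_mem_nhdsWithin] with α (hα : 1 < α)
      rw [← h, Real.zero_rpow (by positivity : α ≠ 0)]
      simp
    rw [show Real.negMulLog c = 0 by rw [← h]; simp]
    exact Tendsto.congr' (this.mono fun α h => h.symm) tendsto_const_nhds
  · have hf : HasDerivAt (fun t : ℝ => c - Real.exp (Real.log c * t))
        (-(c * Real.log c)) 1 := by
      have h1 : HasDerivAt (fun t : ℝ => Real.log c * t) (Real.log c) 1 := by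
        simpa using (hasDerivAt_id (1:ℝ)).const_mul (Real.log c)
      have h2 := (Real.hasDerivAt_exp (Real.log c * 1)).comp 1 h1
      have h3 := h2.const_sub c
      simpa [Real.exp_log h, mul_comm] using h3
    have := hasDerivAt_iff_tendsto_slope.mp hf
    have h4 : Tendsto (slope (fun t : ℝ => c - Real.exp (Real.log c * t)) 1) (𝓝[>] 1)
        (𝓝 (-(c * Real.log c))) :=
      this.mono_left (nhdsWithin_mono _ fun x hx => ne_of_gt hx)
    rw [show Real.negMulLog c = -(c * Real.log c) by rw [Real.negMulLog]; ring]
    refine h4.congr fun α => ?_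
    rw [slope_def_field, mul_one, Real.exp_log h, ← Real.rpow_def_of_pos h α]
    ring_nf

lemma aux_term_le {c α : ℝ} (hc0 : 0 ≤ c) (hα : 1 ≤ α) :
    c - c ^ α ≤ (α - 1) * Real.negMulLog c := by
  rcases eq_or_lt_of_le hc0 with h | h
  · rw [← h, Real.zero_rpow (by positivity : α ≠ 0)]
    simp
  · have key : 1 - c ^ (α - 1) ≤ -((α - 1) * Real.log c) := by
      have := Real.add_one_le_exp ((α - 1) * Real.log c)
      rw [Real.rpow_def_of_pos h, mul_comm (Real.log c)]
      linarith
    have h2 : c * (1 - c ^ (α - 1)) ≤ c * (-((α - 1) * Real.log c)) :=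
      mul_le_mul_of_nonneg_left key hc0
    have h3 : c * c ^ (α - 1) = c ^ α := by
      rw [← Real.rpow_one_add' (le_of_lt h) (by intro hh; simp at hh; linarith [hα];)]
      ring_nf
    rw [Real.negMulLog]
    nlinarith [h2, h3]

section lemB
variable {q : ℕ → ℝ} (hq : IsProbDist q)
include hq

lemma aux_shannon_eq : shannonEntropy q = ∑' n, ENNReal.ofReal (Real.negMulLog (q n)) := by
  refine tsum_congr fun n => ?_
  rw [Real.negMulLog, neg_mul]

lemma aux_E_nonneg : 0 ≤ ∑' n, Real.negMulLog (q n) :=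
  tsum_nonneg fun n => Real.negMulLog_nonneg (hq.1 n) (aux_le_one_s19 hq n)

lemma aux_one_sub_le {α : ℝ} (hα : 1 < α) (hE : Summable (fun n => Real.negMulLog (q n))) :
    1 - (∑' n, q n ^ α) ≤ (α - 1) * ∑' n, Real.negMulLog (q n) := by
  have h1 : ∑' n, (q n - q n ^ α) ≤ ∑' n, (α - 1) * Real.negMulLog (q n) := by
    refine Summable.tsum_le_tsum (fun n => ?_) ((aux_summable hq).sub (aux_rpow_summable hq hα.le))
      (hE.mul_left _)
    have := aux_term_le (hq.1 n) hα.le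
    linarith
  rw [Summable.tsum_sub (aux_summable hq) (aux_rpow_summable hq hα.le), hq.2.tsum_eq,
    tsum_mul_left] at h1
  exact h1

lemma aux_lower (s : Finset ℕ) {α : ℝ} (hα : 1 < α) :
    ENNReal.ofReal (∑ n ∈ s, (q n - q n ^ α) / (α - 1)) ≤ renyiEntropy q α := by
  rw [aux_renyiEntropy_eq hq hα]
  apply ENNReal.ofReal_le_ofReal
  set S := ∑' n, q n ^ α with hSdef
  have hS : 0 < S := aux_tsum_rpow_pos hq hα.le
  have hlog : Real.log S ≤ S - 1 := Real.log_le_sub_one_of_pos hS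
  have hsum : ∑ n ∈ s, (q n - q n ^ α) ≤ 1 - S := by
    have h1 : ∑ n ∈ s, (q n - q n ^ α) ≤ ∑' n, (q n - q n ^ α) :=
      Summable.sum_le_tsum s (fun i _ => sub_nonneg.2 (aux_rpow_le_self_s19 hq hα.le i))
        ((aux_summable hq).sub (aux_rpow_summable hq hα.le))
    rwa [Summable.tsum_sub (aux_summable hq) (aux_rpow_summable hq hα.le), hq.2.tsum_eq] at h1
  have hα1 : (0:ℝ) < α - 1 := by linarith
  rw [← Finset.sum_div, div_le_iff₀ hα1]
  have hne : (1:ℝ) - α ≠ 0 := by linarith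
  have hkey : (1 - α)⁻¹ * Real.log S * (α - 1) = -Real.log S := by
    field_simp
    ring
  rw [hkey]
  linarith

lemma aux_upper {α : ℝ} (hα : 1 < α) (hE : Summable (fun n => Real.negMulLog (q n))) :
    renyiEntropy q α ≤
      ENNReal.ofReal ((∑' n, q n ^ α)⁻¹ * ∑' n, Real.negMulLog (q n)) := by
  rw [aux_renyiEntropy_eq hq hα]
  apply ENNReal.ofReal_le_ofReal
  set S := ∑' n, q n ^ α with hSdef
  set E := ∑' n, Real.negMulLog (q n) with hEdef
  have hS : 0 < S := aux_tsum_rpow_pos hq hα.le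
  have hα1 : (0:ℝ) < α - 1 := by linarith
  have hEnn : 0 ≤ E := aux_E_nonneg hq
  have h0 := Real.log_le_sub_one_of_pos (inv_pos.mpr hS)
  rw [Real.log_inv] at h0
  have h1 : -Real.log S * S ≤ 1 - S := by
    have := mul_le_mul_of_nonneg_right h0 hS.le
    rw [sub_mul, inv_mul_cancel₀ hS.ne'] at this
    linarith
  have h2 : 1 - S ≤ (α - 1) * E := aux_one_sub_le hq hα hE
  have hne : (1:ℝ) - α ≠ 0 := by linarith
  have e1 : (1 - α)⁻¹ * Real.log S = -Real.log S * S / ((α - 1) * S) := by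
    field_simp
    ring
  have e2 : S⁻¹ * E = (α - 1) * E / ((α - 1) * S) := by
    field_simp
  rw [e1, e2]
  exact div_le_div_of_nonneg_right (by linarith) (le_of_lt (by positivity))

lemma aux_S_tendsto (hE : Summable (fun n => Real.negMulLog (q n))) :
    Tendsto (fun α : ℝ => ∑' n, q n ^ α) (𝓝[>] 1) (𝓝 1) := by
  set E := ∑' n, Real.negMulLog (q n)
  have hlow : Tendsto (fun α : ℝ => 1 - (α - 1) * E) (𝓝[>] 1) (𝓝 1) := by
    have : Tendsto (fun α : ℝ => 1 - (α - 1) * E) (𝓝 1) (𝓝 1) := by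
      have : Continuous (fun α : ℝ => 1 - (α - 1) * E) := by continuity
      simpa using this.tendsto 1
    exact this.mono_left nhdsWithin_le_nhds
  refine tendsto_of_tendsto_of_tendsto_of_le_of_le' hlow tendsto_const_nhds ?_ ?_
  · filter_upwards [self_mem_nhdsWithin] with α (hα : 1 < α)
    have := aux_one_sub_le hq hα hE
    linarith
  · filter_upwards [self_mem_nhdsWithin] with α (hα : 1 < α)
    exact aux_tsum_rpow_le_one hq hα.le

theorem lemB : Tendsto (fun α : ℝ => renyiEntropy q α) (𝓝[>] 1) (𝓝 (shannonEntropy q)) := by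
  rw [tendsto_order]
  constructor
  · intro a ha
    rw [aux_shannon_eq hq, ENNReal.tsum_eq_iSup_sum] at ha
    obtain ⟨s, hs⟩ := lt_iSup_iff.mp ha
    have hF : Tendsto (fun α : ℝ => ∑ n ∈ s, (q n - q n ^ α) / (α - 1)) (𝓝[>] 1)
        (𝓝 (∑ n ∈ s, Real.negMulLog (q n))) :=
      tendsto_finset_sum s (fun n _ => aux_slope (hq.1 n))
    have hOF : Tendsto (fun α : ℝ => ENNReal.ofReal (∑ n ∈ s, (q n - q n ^ α) / (α - 1)))
        (𝓝[>] 1) (𝓝 (ENNReal.ofReal (∑ n ∈ s, Real.negMulLog (q n)))) :=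
      (ENNReal.continuous_ofReal.tendsto _).comp hF
    have hlt : a < ENNReal.ofReal (∑ n ∈ s, Real.negMulLog (q n)) := by
      rwa [ENNReal.ofReal_sum_of_nonneg
        (fun i _ => Real.negMulLog_nonneg (hq.1 i) (aux_le_one_s19 hq i))]
    filter_upwards [hOF.eventually_const_lt hlt, self_mem_nhdsWithin] with α h1 (h2 : 1 < α)
    exact h1.trans_le (aux_lower hq s h2)
  · intro a ha
    have hfin : (∑' n, ENNReal.ofReal (Real.negMulLog (q n))) ≠ ∞ := by
      rw [← aux_shannon_eq hq]; exact ha.ne_top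
    have hE : Summable (fun n => Real.negMulLog (q n)) := by
      refine (ENNReal.summable_toReal hfin).congr fun n => ?_
      exact ENNReal.toReal_ofReal (Real.negMulLog_nonneg (hq.1 n) (aux_le_one_s19 hq n))
    set E := ∑' n, Real.negMulLog (q n) with hEdef
    have hEe : shannonEntropy q = ENNReal.ofReal E := by
      rw [aux_shannon_eq hq, ← ENNReal.ofReal_tsum_of_nonneg
        (fun n => Real.negMulLog_nonneg (hq.1 n) (aux_le_one_s19 hq n)) hE]
    have hup : Tendsto (fun α : ℝ => ENNReal.ofReal ((∑' n, q n ^ α)⁻¹ * E)) (𝓝[>] 1)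
        (𝓝 (ENNReal.ofReal E)) := by
      have h1 : Tendsto (fun α : ℝ => (∑' n, q n ^ α)⁻¹ * E) (𝓝[>] 1) (𝓝 (1⁻¹ * E)) :=
        ((aux_S_tendsto hq hE).inv₀ one_ne_zero).mul_const E
      simpa [Function.comp_def] using (ENNReal.continuous_ofReal.tendsto _).comp h1
    have hlt : ENNReal.ofReal E < a := hEe ▸ ha
    filter_upwards [hup.eventually_lt_const hlt, self_mem_nhdsWithin] with α h1 (h2 : 1 < α)
    exact (aux_upper hq h2 hE).trans_lt h1

end lemB
section part1aux

lemma aux_negMulLog_subadd {a b : ℝ} (ha : 0 ≤ a) (hb : 0 ≤ b) :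
    Real.negMulLog (a + b) ≤ Real.negMulLog a + Real.negMulLog b := by
  rcases eq_or_lt_of_le ha with h | h
  · rw [← h]; simp
  rcases eq_or_lt_of_le hb with h' | h'
  · rw [← h']; simp
  have hab : (0:ℝ) < a + b := by linarith
  have l1 : Real.log a ≤ Real.log (a + b) := Real.log_le_log h (by linarith)
  have l2 : Real.log b ≤ Real.log (a + b) := Real.log_le_log h' (by linarith)
  simp only [Real.negMulLog]
  nlinarith [mul_le_mul_of_nonneg_left l1 ha, mul_le_mul_of_nonneg_left l2 hb]

noncomputable def auxUnif (m : ℕ) : ℕ → ℝ := fun k => if k < m then (m:ℝ)⁻¹ else 0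

noncomputable def auxMix (p : ℕ → ℝ) (ε : ℝ) (m : ℕ) : ℕ → ℝ :=
  fun k => (1 - ε) * p k + ε * auxUnif m k

lemma aux_unif_prob {m : ℕ} (hm : 0 < m) : IsProbDist (auxUnif m) := by
  constructor
  · intro k
    unfold auxUnif
    split_ifs
    · positivity
    · exact le_rfl
  · have h := hasSum_sum_of_ne_finset_zero (L := SummationFilter.unconditional ℕ) (f := auxUnif m) (s := Finset.range m)
      (fun b hb => by simp [auxUnif, Finset.mem_range] at hb ⊢; omega)
    have e1 : ∑ b ∈ Finset.range m, auxUnif m b =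
        ∑ _b ∈ Finset.range m, (m:ℝ)⁻¹ :=
      Finset.sum_congr rfl (fun b hb => by
        simp only [auxUnif, if_pos (Finset.mem_range.mp hb)])
    have hm' : (m:ℝ) ≠ 0 := Nat.cast_ne_zero.mpr hm.ne'
    have e2 : ∑ _b ∈ Finset.range m, (m:ℝ)⁻¹ = 1 := by
      rw [Finset.sum_const, Finset.card_range, nsmul_eq_mul]
      field_simp
    rwa [e1, e2] at h

lemma aux_unif_negMulLog_hasSum {m : ℕ} (hm : 0 < m) :
    HasSum (fun k => Real.negMulLog (auxUnif m k)) (Real.log m) := by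
  have h := hasSum_sum_of_ne_finset_zero (L := SummationFilter.unconditional ℕ) (f := fun k => Real.negMulLog (auxUnif m k))
    (s := Finset.range m)
    (fun b hb => by
      have : ¬ b < m := by simpa [Finset.mem_range] using hb
      simp [auxUnif, this])
  have : ∑ b ∈ Finset.range m, Real.negMulLog (auxUnif m b) =
      ∑ _b ∈ Finset.range m, Real.negMulLog ((m:ℝ)⁻¹) :=
    Finset.sum_congr rfl (fun b hb => by
      simp only [auxUnif, if_pos (Finset.mem_range.mp hb)])
  rw [this, Finset.sum_const, Finset.card_range, nsmul_eq_mul, Real.negMulLog,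
    Real.log_inv] at h
  have hm' : (m:ℝ) ≠ 0 := Nat.cast_ne_zero.mpr hm.ne'
  have e : (m:ℝ) * (-(m:ℝ)⁻¹ * -Real.log m) = Real.log m := by field_simp
  rwa [e] at h

end part1aux
section mix
variable {p : ℕ → ℝ} (hp : IsProbDist p) {ε : ℝ} (hε0 : 0 < ε) (hε1 : ε ≤ 1)
  {m : ℕ} (hm : 0 < m)
include hp hε0 hε1 hm

lemma aux_mix_prob : IsProbDist (auxMix p ε m) := by
  constructor
  · intro k
    have h1 := hp.1 k
    have h2 := (aux_unif_prob hm).1 k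
    have : (0:ℝ) ≤ 1 - ε := by linarith
    unfold auxMix
    positivity
  · have h := (hp.2.mul_left (1 - ε)).add ((aux_unif_prob hm).2.mul_left ε)
    have h' : HasSum (auxMix p ε m) ((1 - ε) * 1 + ε * 1) := h
    simpa using h'

lemma aux_mix_dTV : dTV (auxMix p ε m) p ≤ 2 * ε := by
  have he : ∀ k, |auxMix p ε m k - p k| = ε * |auxUnif m k - p k| := fun k => by
    rw [show auxMix p ε m k - p k = ε * (auxUnif m k - p k) by unfold auxMix; ring,
      abs_mul, abs_of_pos hε0]
  rw [dTV]
  calc ∑' k, |auxMix p ε m k - p k| = ε * ∑' k, |auxUnif m k - p k| := by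
        rw [← tsum_mul_left]; exact tsum_congr he
    _ ≤ ε * 2 := by
        have hb : ∀ k, |auxUnif m k - p k| ≤ auxUnif m k + p k := fun k =>
          (abs_sub _ _).trans (by
            rw [abs_of_nonneg ((aux_unif_prob hm).1 k), abs_of_nonneg (hp.1 k)])
        have hs : Summable (fun k => auxUnif m k + p k) :=
          (aux_summable (aux_unif_prob hm)).add (aux_summable hp)
        have := Summable.tsum_le_tsum hb (Summable.of_nonneg_of_le (fun k => abs_nonneg _) hb hs) hs
        rw [Summable.tsum_add (aux_summable (aux_unif_prob hm)) (aux_summable hp),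
          (aux_unif_prob hm).2.tsum_eq, hp.2.tsum_eq] at this
        linarith [mul_le_mul_of_nonneg_left this hε0.le]
    _ = 2 * ε := by ring

lemma aux_mix_entropy (hE : Summable (fun k => Real.negMulLog (p k))) :
    Summable (fun k => Real.negMulLog (auxMix p ε m k)) ∧
    (1 - ε) * (∑' k, Real.negMulLog (p k)) + ε * Real.log m ≤
      ∑' k, Real.negMulLog (auxMix p ε m k) ∧
    ∑' k, Real.negMulLog (auxMix p ε m k) ≤
      (1 - ε) * (∑' k, Real.negMulLog (p k)) + ε * Real.log m
        + Real.negMulLog (1 - ε) + Real.negMulLog ε := by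
  have hu := aux_unif_prob hm
  have hPm := aux_mix_prob hp hε0 hε1 hm
  have h1ε : (0:ℝ) ≤ 1 - ε := by linarith
  set A : ℕ → ℝ := fun k => (p k * Real.negMulLog (1 - ε) + (1 - ε) * Real.negMulLog (p k))
    + (auxUnif m k * Real.negMulLog ε + ε * Real.negMulLog (auxUnif m k)) with hA
  have hgA : ∀ k, Real.negMulLog (auxMix p ε m k) ≤ A k := fun k => by
    have h1 := aux_negMulLog_subadd (mul_nonneg h1ε (hp.1 k)) (mul_nonneg hε0.le (hu.1 k))
    rw [Real.negMulLog_mul, Real.negMulLog_mul] at h1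
    exact h1
  have hg0 : ∀ k, 0 ≤ Real.negMulLog (auxMix p ε m k) := fun k =>
    Real.negMulLog_nonneg (hPm.1 k) (aux_le_one_s19 hPm k)
  have hAsum : HasSum A ((Real.negMulLog (1 - ε) + (1 - ε) * (∑' k, Real.negMulLog (p k)))
      + (Real.negMulLog ε + ε * Real.log m)) := by
    have h1 : HasSum (fun k => p k * Real.negMulLog (1 - ε)) (Real.negMulLog (1 - ε)) := by
      simpa using hp.2.mul_right (Real.negMulLog (1 - ε))
    have h2 : HasSum (fun k => (1 - ε) * Real.negMulLog (p k))
        ((1 - ε) * ∑' k, Real.negMulLog (p k)) := hE.hasSum.mul_left _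
    have h3 : HasSum (fun k => auxUnif m k * Real.negMulLog ε) (Real.negMulLog ε) := by
      simpa using hu.2.mul_right (Real.negMulLog ε)
    have h4 : HasSum (fun k => ε * Real.negMulLog (auxUnif m k)) (ε * Real.log m) :=
      (aux_unif_negMulLog_hasSum hm).mul_left ε
    exact (h1.add h2).add (h3.add h4)
  have hgsum : Summable (fun k => Real.negMulLog (auxMix p ε m k)) :=
    Summable.of_nonneg_of_le hg0 hgA hAsum.summable
  refine ⟨hgsum, ?_, ?_⟩
  · -- lower bound via concavity
    have hlow : ∀ k, (1 - ε) * Real.negMulLog (p k) + ε * Real.negMulLog (auxUnif m k) ≤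
        Real.negMulLog (auxMix p ε m k) := fun k => by
      have := Real.concaveOn_negMulLog.2 (Set.mem_Ici.2 (hp.1 k)) (Set.mem_Ici.2 (hu.1 k))
        h1ε hε0.le (by ring)
      simpa [smul_eq_mul, auxMix] using this
    have hsum2 : Summable (fun k => (1 - ε) * Real.negMulLog (p k)
        + ε * Real.negMulLog (auxUnif m k)) :=
      (hE.mul_left _).add ((aux_unif_negMulLog_hasSum hm).summable.mul_left _)
    have := Summable.tsum_le_tsum hlow hsum2 hgsum
    rwa [Summable.tsum_add (hE.mul_left _) ((aux_unif_negMulLog_hasSum hm).summable.mul_left _),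
      tsum_mul_left, tsum_mul_left, (aux_unif_negMulLog_hasSum hm).tsum_eq] at this
  · have := Summable.tsum_le_tsum hgA hgsum hAsum.summable
    rw [hAsum.tsum_eq] at this
    linarith

end mix
lemma aux_renyi_one (q : ℕ → ℝ) : renyiEntropy q 1 = shannonEntropy q := by
  simp [renyiEntropy]

lemma aux_shannon_ofReal {q : ℕ → ℝ} (hq : IsProbDist q)
    (hE : Summable (fun n => Real.negMulLog (q n))) :
    shannonEntropy q = ENNReal.ofReal (∑' n, Real.negMulLog (q n)) := by
  rw [aux_shannon_eq hq, ← ENNReal.ofReal_tsum_of_nonneg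
    (fun n => Real.negMulLog_nonneg (hq.1 n) (aux_le_one_s19 hq n)) hE]

lemma aux_eps_tendsto : Tendsto (fun n : ℕ => ((n:ℝ) + 1)⁻¹) atTop (𝓝 0) := by
  simpa [one_div] using tendsto_one_div_add_atTop_nhds_zero_nat (𝕜 := ℝ)

theorem aux_construct {p : ℕ → ℝ} (hp : IsProbDist p)
    (hE : Summable (fun k => Real.negMulLog (p k))) (t : ℕ → ℝ) (ht0 : ∀ n, 0 ≤ t n) :
    ∃ P : ℕ → ℕ → ℝ, (∀ n, IsProbDist (P n)) ∧
      Tendsto (fun n => dTV (P n) p) atTop (𝓝 0) ∧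
      ∀ n : ℕ, Summable (fun k => Real.negMulLog (P n k)) ∧
        (1 - ((n:ℝ)+1)⁻¹) * (∑' k, Real.negMulLog (p k)) + t n
          ≤ ∑' k, Real.negMulLog (P n k) ∧
        ∑' k, Real.negMulLog (P n k) ≤
          (1 - ((n:ℝ)+1)⁻¹) * (∑' k, Real.negMulLog (p k)) + t n + ((n:ℝ)+1)⁻¹
            + Real.negMulLog (1 - ((n:ℝ)+1)⁻¹) + Real.negMulLog (((n:ℝ)+1)⁻¹) := by
  set ε : ℕ → ℝ := fun n => ((n:ℝ) + 1)⁻¹ with hεdef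
  have hε0 : ∀ n, 0 < ε n := fun n => by positivity
  have hε1 : ∀ n, ε n ≤ 1 := fun n => by
    rw [hεdef]
    rw [inv_le_one_iff₀]
    right; push_cast; linarith [Nat.cast_nonneg (α := ℝ) n]
  set m : ℕ → ℕ := fun n => ⌈Real.exp (((n:ℝ) + 1) * t n)⌉₊ with hmdef
  have hm : ∀ n, 0 < m n := fun n => Nat.ceil_pos.mpr (Real.exp_pos _)
  have hc : ∀ n, t n ≤ ε n * Real.log (m n) ∧ ε n * Real.log (m n) ≤ t n + ε n := by
    intro n
    set x := Real.exp (((n:ℝ) + 1) * t n) with hxdef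
    have hx0 : 0 < x := Real.exp_pos _
    have hx1 : 1 ≤ x := Real.one_le_exp (mul_nonneg (by positivity) (ht0 n))
    have hn1 : (0:ℝ) < (n:ℝ) + 1 := by positivity
    have hlow : ((n:ℝ) + 1) * t n ≤ Real.log (m n) := by
      rw [← Real.log_exp (((n:ℝ) + 1) * t n)]
      exact Real.log_le_log hx0 (Nat.le_ceil _)
    have hup : Real.log (m n) ≤ ((n:ℝ) + 1) * t n + 1 := by
      have h1 : (m n : ℝ) ≤ x + 1 := (Nat.ceil_lt_add_one hx0.le).le
      have h2 : Real.log (m n) ≤ Real.log (x + 1) :=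
        Real.log_le_log (by exact_mod_cast hm n) h1
      have h3 : Real.log ((x + 1) / x) ≤ (x + 1) / x - 1 :=
        Real.log_le_sub_one_of_pos (by positivity)
      rw [Real.log_div (by positivity) hx0.ne'] at h3
      have h4 : (x + 1) / x - 1 = 1 / x := by field_simp; ring
      have h5 : 1 / x ≤ 1 := by
        rw [div_le_one hx0]; exact hx1
      have h6 : Real.log x = ((n:ℝ) + 1) * t n := Real.log_exp _
      linarith
    constructor
    · have := mul_le_mul_of_nonneg_left hlow (hε0 n).le
      rwa [hεdef, ← mul_assoc, inv_mul_cancel₀ hn1.ne', one_mul] at this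
    · have := mul_le_mul_of_nonneg_left hup (hε0 n).le
      rw [hεdef, mul_add, ← mul_assoc, inv_mul_cancel₀ hn1.ne', one_mul, mul_one] at this
      exact this
  refine ⟨fun n => auxMix p (ε n) (m n), fun n => aux_mix_prob hp (hε0 n) (hε1 n) (hm n),
    ?_, fun n => ?_⟩
  · apply squeeze_zero (fun n => aux_dTV_nonneg hp) (fun n => aux_mix_dTV hp (hε0 n) (hε1 n) (hm n))
    have : Tendsto (fun n : ℕ => 2 * ε n) atTop (𝓝 (2 * 0)) := aux_eps_tendsto.const_mul 2
    simpa using this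
  · obtain ⟨hsum, hlo, hhi⟩ := aux_mix_entropy hp (hε0 n) (hε1 n) (hm n) hE
    exact ⟨hsum, by nlinarith [(hc n).1], by nlinarith [(hc n).2]⟩

theorem aux_part1 {p : ℕ → ℝ} (hp : IsProbDist p) (r : ℝ≥0∞) :
    ∃ P : ℕ → ℕ → ℝ, (∀ n, IsProbDist (P n)) ∧
      Tendsto (fun n => dTV (P n) p) atTop (𝓝 0) ∧
      ∃ L : ℕ → ℝ≥0∞,
        (∀ n, Tendsto (fun α : ℝ => renyiEntropy (P n) α) (𝓝[>] 1)
          (𝓝 (L n))) ∧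
        Tendsto L atTop (𝓝 (renyiEntropy p 1 + r)) := by
  by_cases hfin : shannonEntropy p = ∞
  · refine ⟨fun _ => p, fun _ => hp, ?_, fun _ => shannonEntropy p, fun n => lemB hp, ?_⟩
    · have : (fun _ : ℕ => dTV p p) = fun _ => 0 := by
        funext n; simp [dTV]
      rw [this]; exact tendsto_const_nhds
    · rw [aux_renyi_one, hfin, top_add]
      exact tendsto_const_nhds
  · have hE : Summable (fun n => Real.negMulLog (p n)) := by
      refine (ENNReal.summable_toReal (by rw [← aux_shannon_eq hp]; exact hfin)).congr fun n => ?_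
      exact ENNReal.toReal_ofReal (Real.negMulLog_nonneg (hp.1 n) (aux_le_one_s19 hp n))
    set E := ∑' k, Real.negMulLog (p k) with hEdef
    have hE0 : 0 ≤ E := tsum_nonneg fun n => Real.negMulLog_nonneg (hp.1 n) (aux_le_one_s19 hp n)
    by_cases hr : r = ∞
    · obtain ⟨P, hP, hTV, hbounds⟩ := aux_construct hp hE (fun n => (n:ℝ)) (fun n => Nat.cast_nonneg n)
      refine ⟨P, hP, hTV, fun n => shannonEntropy (P n), fun n => lemB (hP n), ?_⟩
      rw [aux_renyi_one, hr, add_top]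
      have hEn : Tendsto (fun n => ∑' k, Real.negMulLog (P n k)) atTop atTop := by
        apply tendsto_atTop_mono (fun n => ?_) tendsto_natCast_atTop_atTop
        have h := (hbounds n).2.1
        have hε1 : ((n:ℝ)+1)⁻¹ ≤ 1 := by
          rw [inv_le_one_iff₀]; right; linarith [Nat.cast_nonneg (α := ℝ) n]
        nlinarith
      have := ENNReal.tendsto_ofReal_atTop.comp hEn
      refine this.congr fun n => ?_
      rw [Function.comp_apply, ← aux_shannon_ofReal (hP n) (hbounds n).1]
    · set R := r.toReal with hRdef
      have hR0 : 0 ≤ R := ENNReal.toReal_nonneg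
      obtain ⟨P, hP, hTV, hbounds⟩ := aux_construct hp hE (fun _ => R) (fun _ => hR0)
      refine ⟨P, hP, hTV, fun n => shannonEntropy (P n), fun n => lemB (hP n), ?_⟩
      have hεt := aux_eps_tendsto
      have hlow : Tendsto (fun n : ℕ => (1 - ((n:ℝ)+1)⁻¹) * E + R) atTop (𝓝 (E + R)) := by
        have h1 : Tendsto (fun n : ℕ => 1 - ((n:ℝ)+1)⁻¹) atTop (𝓝 1) := by
          simpa using (tendsto_const_nhds (x := (1:ℝ))).sub hεt
        simpa using (h1.mul_const E).add_const R
      have hnm : Tendsto (fun n : ℕ => Real.negMulLog (((n:ℝ)+1)⁻¹)) atTop (𝓝 0) := by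
        have := (Real.continuous_negMulLog.tendsto 0).comp hεt
        simpa [Function.comp_def] using this
      have hnm1 : Tendsto (fun n : ℕ => Real.negMulLog (1 - ((n:ℝ)+1)⁻¹)) atTop (𝓝 0) := by
        have h1 : Tendsto (fun n : ℕ => 1 - ((n:ℝ)+1)⁻¹) atTop (𝓝 1) := by
          simpa using (tendsto_const_nhds (x := (1:ℝ))).sub hεt
        have := (Real.continuous_negMulLog.tendsto 1).comp h1
        simpa [Function.comp_def] using this
      have hup : Tendsto (fun n : ℕ => (1 - ((n:ℝ)+1)⁻¹) * E + R + ((n:ℝ)+1)⁻¹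
          + Real.negMulLog (1 - ((n:ℝ)+1)⁻¹) + Real.negMulLog (((n:ℝ)+1)⁻¹)) atTop
          (𝓝 (E + R)) := by
        have := ((hlow.add hεt).add hnm1).add hnm
        simpa using this
      have hEn : Tendsto (fun n => ∑' k, Real.negMulLog (P n k)) atTop (𝓝 (E + R)) :=
        tendsto_of_tendsto_of_tendsto_of_le_of_le hlow hup
          (fun n => (hbounds n).2.1) (fun n => (hbounds n).2.2)
      have hfinal : Tendsto (fun n => ENNReal.ofReal (∑' k, Real.negMulLog (P n k))) atTop
          (𝓝 (ENNReal.ofReal (E + R))) :=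
        (ENNReal.continuous_ofReal.tendsto _).comp hEn
      have heq : ENNReal.ofReal (E + R) = renyiEntropy p 1 + r := by
        rw [aux_renyi_one, ENNReal.ofReal_add hE0 hR0, aux_shannon_ofReal hp hE,
          hRdef, ENNReal.ofReal_toReal hr]
      rw [← heq]
      refine hfinal.congr fun n => ?_
      rw [← aux_shannon_ofReal (hP n) (hbounds n).1]

/-- For any distribution `P` and any `r ∈ [0,∞]` there is a
sequence `Pₙ → P` (in total variation) such that
`lim_{n→∞} lim_{α→1+} H_α(Pₙ) = H₁(P) + r`; yet for every sequence `Pₙ → P`,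
the inner limit `lim_{n→∞} H_α(Pₙ)` exists and equals `H_α(P)` for each
`α > 1`, and `lim_{α→1+} H_α(P) = H₁(P)`, so the iterated limit in the other
order is always `H₁(P)`. -/
theorem stmt19 (p : ℕ → ℝ) (hp : IsProbDist p) :
    (∀ r : ℝ≥0∞, ∃ P : ℕ → ℕ → ℝ, (∀ n, IsProbDist (P n)) ∧
      Tendsto (fun n => dTV (P n) p) atTop (𝓝 0) ∧
      ∃ L : ℕ → ℝ≥0∞,
        (∀ n, Tendsto (fun α : ℝ => renyiEntropy (P n) α) (𝓝[>] 1)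
          (𝓝 (L n))) ∧
        Tendsto L atTop (𝓝 (renyiEntropy p 1 + r))) ∧
    (∀ P : ℕ → ℕ → ℝ, (∀ n, IsProbDist (P n)) →
      Tendsto (fun n => dTV (P n) p) atTop (𝓝 0) →
      (∀ α : ℝ, 1 < α →
        Tendsto (fun n => renyiEntropy (P n) α) atTop (𝓝 (renyiEntropy p α)))
      ∧ Tendsto (fun α : ℝ => renyiEntropy p α) (𝓝[>] 1)
          (𝓝 (renyiEntropy p 1))) := by
  constructor
  · exact fun r => aux_part1 hp r
  · intro P hP hTV
    refine ⟨fun α hα => lemA hp P hP hTV hα, ?_⟩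
    rw [aux_renyi_one]
    exact lemB hp
end
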